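/- arXiv:2411.09257 — 4 statements merged into one kernel-verified Lean document; each statement's English description precedes it below -/
import Mathlib

section
/- For every n ∈ ℕ₀, q̂(n) = Σ_{(n₁,…,n_k)∈Ω(k,n)} (Π_{j=1}^k λ_j^{n_j}/n_j!) · Σ_{r₁+⋯+r_{k₀}=z_k} z_k! · Π_{j₀=1}^{k₀} (j₀^{r_{j₀}}/r_{j₀}!) e^{−ρ_{j₀}(1−e^{−j₀λ})} 𝓑_{r_{j₀}}(ρ_{j₀} e^{−j₀λ}), where z_k = n₁+⋯+n_k and the inner sum ranges over all (r₁,…,r_{k₀}) ∈ ℕ₀^{k₀} with r₁+⋯+r_{k₀} = z_k. -/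
/-- GCP state probabilities: `p(n,t) = ∑_{Ω(k,n)} ∏_j ((λ_j t)^{x_j}/x_j!) e^{−λ_j t}`,
where index `j : Fin k` encodes jump size `j+1`. -/
noncomputable def gcpPmf (k : ℕ) (lam : Fin k → ℝ) (n : ℕ) (t : ℝ) : ℝ :=
  ∑' x : Fin k → ℕ,
    if (∑ j : Fin k, ((j : ℕ) + 1) * x j) = n then
      ∏ j : Fin k, (lam j * t) ^ (x j) / (Nat.factorial (x j)) * Real.exp (-(lam j * t))
    else 0

/-- Non-homogeneous GCP state probabilities with cumulative rates `ρ_{j₀}`: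
`p_ρ(m) = ∑_{Ω(k₀,m)} ∏_{j₀} (ρ_{j₀}^{x_{j₀}}/x_{j₀}!) e^{−ρ_{j₀}}`. -/
noncomputable def nhGcpPmf (k0 : ℕ) (rho : Fin k0 → ℝ) (m : ℕ) : ℝ :=
  ∑' x : Fin k0 → ℕ,
    if (∑ j0 : Fin k0, ((j0 : ℕ) + 1) * x j0) = m then
      ∏ j0 : Fin k0, rho j0 ^ (x j0) / (Nat.factorial (x j0)) * Real.exp (-(rho j0))
    else 0

/-- Non-homogeneous IGCP state probabilities: `q̂(n) = ∑_{m=0}^∞ p(n,m) p_ρ(m)`. -/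
noncomputable def nhIgcpPmf (k : ℕ) (lam : Fin k → ℝ) (k0 : ℕ) (rho : Fin k0 → ℝ)
    (n : ℕ) : ℝ :=
  ∑' m : ℕ, gcpPmf k lam n m * nhGcpPmf k0 rho m

/-- The `n`-th order Bell polynomial `𝓑_n(x) = e^{−x} ∑_{r=0}^∞ r^n x^r / r!`. -/
noncomputable def bellPoly (n : ℕ) (x : ℝ) : ℝ :=
  Real.exp (-x) * ∑' r : ℕ, (r : ℝ) ^ n * x ^ r / (Nat.factorial r)


open Finset

lemma aux_summable_pow (r : ℕ) {x : ℝ} (hx : 0 ≤ x) :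
    Summable (fun y : ℕ => (y : ℝ) ^ r * x ^ y / (Nat.factorial y)) := by
  refine Summable.of_nonneg_of_le (fun y => by positivity) (fun y => ?_)
    (Real.summable_pow_div_factorial ((2:ℝ)^r * x))
  have h1 : (y:ℝ)^r ≤ ((2:ℝ)^r)^y := by
    calc (y:ℝ)^r ≤ ((2:ℝ)^y)^r := by
          apply pow_le_pow_left₀ (by positivity)
          exact_mod_cast (Nat.lt_two_pow_self (n := y)).le
      _ = ((2:ℝ)^r)^y := by rw [← pow_mul, ← pow_mul, Nat.mul_comm]
  calc (y:ℝ)^r * x^y / (Nat.factorial y) ≤ ((2:ℝ)^r)^y * x^y / (Nat.factorial y) := by gcongr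
    _ = ((2:ℝ)^r * x)^y / (Nat.factorial y) := by rw [mul_pow]

lemma aux_tsum_pi_prod : ∀ (K : ℕ) (f : Fin K → ℕ → ENNReal),
    ∑' y : Fin K → ℕ, ∏ j, f j (y j) = ∏ j, ∑' m, f j m := by
  intro K
  induction K with
  | zero =>
    intro f
    rw [Finset.univ_eq_empty, tsum_eq_single (fun i => i.elim0)]
    · simp
    · intro b hb; exact absurd (Subsingleton.elim b _) hb
  | succ K ih =>
    intro f
    rw [← (Fin.consEquiv (fun _ : Fin (K+1) => ℕ)).tsum_eq
      (fun y : Fin (K+1) → ℕ => ∏ j, f j (y j))]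
    have : ∀ p : ℕ × (Fin K → ℕ),
        (∏ j, f j ((Fin.consEquiv (fun _ : Fin (K+1) => ℕ)) p j))
          = f 0 p.1 * ∏ j : Fin K, f j.succ (p.2 j) := by
      intro p
      rw [Fin.prod_univ_succ]
      simp [Fin.consEquiv]
    calc ∑' p : ℕ × (Fin K → ℕ), ∏ j, f j ((Fin.consEquiv (fun _ : Fin (K+1) => ℕ)) p j)
        = ∑' (a : ℕ) (b : Fin K → ℕ), f 0 a * ∏ j : Fin K, f j.succ (b j) := by
          rw [← ENNReal.tsum_prod]; exact tsum_congr this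
      _ = (∑' a : ℕ, f 0 a) * ∏ j : Fin K, ∑' m, f j.succ m := by
          simp_rw [ENNReal.tsum_mul_left, ih fun j => f j.succ, ENNReal.tsum_mul_right]
      _ = ∏ j, ∑' m, f j m := by rw [Fin.prod_univ_succ]

lemma aux_mem_box {K m : ℕ} {x : Fin K → ℕ} (h : ∑ j : Fin K, ((j:ℕ)+1) * x j = m) :
    x ∈ Fintype.piFinset (fun _ : Fin K => Finset.range (m+1)) := by
  simp only [Fintype.mem_piFinset, Finset.mem_range, Nat.lt_succ_iff]
  intro j
  calc x j ≤ ((j:ℕ)+1) * x j := Nat.le_mul_of_pos_left _ (Nat.succ_pos _)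
    _ ≤ _ := h ▸ Finset.single_le_sum (f := fun i : Fin K => ((i:ℕ)+1) * x i)
        (fun i _ => Nat.zero_le _) (Finset.mem_univ j)

lemma aux_mem_box2 {K z : ℕ} {r : Fin K → ℕ} (h : ∑ j : Fin K, r j = z) :
    r ∈ Fintype.piFinset (fun _ : Fin K => Finset.range (z+1)) := by
  simp only [Fintype.mem_piFinset, Finset.mem_range, Nat.lt_succ_iff]
  intro j
  exact h ▸ Finset.single_le_sum (f := fun i => r i) (fun i _ => Nat.zero_le _) (Finset.mem_univ j)

open Finset

lemma gcpPmf_eq_sum (k : ℕ) (lam : Fin k → ℝ) (n : ℕ) (t : ℝ) :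
    gcpPmf k lam n t = ∑ x ∈ Fintype.piFinset (fun _ : Fin k => Finset.range (n+1)),
      (if (∑ j : Fin k, ((j : ℕ) + 1) * x j) = n then
        ∏ j : Fin k, (lam j * t) ^ (x j) / (Nat.factorial (x j)) * Real.exp (-(lam j * t))
      else 0) := by
  refine tsum_eq_sum (fun x hx => if_neg (fun h => hx (aux_mem_box h)))

lemma nhGcpPmf_eq_sum (k0 : ℕ) (rho : Fin k0 → ℝ) (m : ℕ) :
    nhGcpPmf k0 rho m = ∑ x ∈ Fintype.piFinset (fun _ : Fin k0 => Finset.range (m+1)),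
      (if (∑ j0 : Fin k0, ((j0 : ℕ) + 1) * x j0) = m then
        ∏ j0 : Fin k0, rho j0 ^ (x j0) / (Nat.factorial (x j0)) * Real.exp (-(rho j0))
      else 0) := by
  refine tsum_eq_sum (fun x hx => if_neg (fun h => hx (aux_mem_box h)))

lemma nhGcpPmf_term_nonneg {k0 : ℕ} {rho : Fin k0 → ℝ} (hrho : ∀ j0, 0 ≤ rho j0)
    (x : Fin k0 → ℕ) :
    0 ≤ ∏ j0 : Fin k0, rho j0 ^ (x j0) / (Nat.factorial (x j0)) * Real.exp (-(rho j0)) :=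
  Finset.prod_nonneg fun j0 _ => mul_nonneg
    (div_nonneg (pow_nonneg (hrho j0) _) (by positivity)) (Real.exp_nonneg _)

lemma nhGcpPmf_nonneg {k0 : ℕ} {rho : Fin k0 → ℝ} (hrho : ∀ j0, 0 ≤ rho j0) (m : ℕ) :
    0 ≤ nhGcpPmf k0 rho m := by
  refine tsum_nonneg fun x => ?_
  split
  · exact nhGcpPmf_term_nonneg hrho x
  · exact le_rfl

lemma nhGcpPmf_le_one {k0 : ℕ} {rho : Fin k0 → ℝ} (hrho : ∀ j0, 0 ≤ rho j0) (m : ℕ) :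
    nhGcpPmf k0 rho m ≤ 1 := by
  rw [nhGcpPmf_eq_sum]
  calc ∑ x ∈ Fintype.piFinset (fun _ : Fin k0 => Finset.range (m+1)),
      (if (∑ j0 : Fin k0, ((j0 : ℕ) + 1) * x j0) = m then
        ∏ j0 : Fin k0, rho j0 ^ (x j0) / (Nat.factorial (x j0)) * Real.exp (-(rho j0))
      else 0)
      ≤ ∑ x ∈ Fintype.piFinset (fun _ : Fin k0 => Finset.range (m+1)),
        ∏ j0 : Fin k0, rho j0 ^ (x j0) / (Nat.factorial (x j0)) * Real.exp (-(rho j0)) := by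
        refine Finset.sum_le_sum fun x _ => ?_
        split
        · exact le_rfl
        · exact nhGcpPmf_term_nonneg hrho x
    _ = ∏ j0 : Fin k0, ∑ i ∈ Finset.range (m+1),
          rho j0 ^ i / (Nat.factorial i) * Real.exp (-(rho j0)) :=
        (Finset.prod_univ_sum (fun _ : Fin k0 => Finset.range (m+1)) (fun j0 i => rho j0 ^ i / (Nat.factorial i) * Real.exp (-(rho j0)))).symm
    _ ≤ 1 := by
        refine Finset.prod_le_one (fun j0 _ => Finset.sum_nonneg fun i _ => ?_) (fun j0 _ => ?_)
        · exact mul_nonneg (div_nonneg (pow_nonneg (hrho j0) _) (by positivity))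
            (Real.exp_nonneg _)
        · rw [← Finset.sum_mul]
          calc (∑ i ∈ Finset.range (m+1), rho j0 ^ i / (Nat.factorial i)) * Real.exp (-(rho j0))
              ≤ Real.exp (rho j0) * Real.exp (-(rho j0)) := by
                refine mul_le_mul_of_nonneg_right ?_ (Real.exp_nonneg _)
                exact Real.sum_le_exp_of_nonneg (hrho j0) (m+1)
            _ = 1 := by rw [← Real.exp_add]; simp

lemma aux_summable_m {k0 : ℕ} {rho : Fin k0 → ℝ} (hrho : ∀ j0, 0 ≤ rho j0)
    {L : ℝ} (hL : 0 < L) (z : ℕ) :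
    Summable (fun m : ℕ => (m:ℝ)^z * Real.exp (-(L * m)) * nhGcpPmf k0 rho m) := by
  have hlt : ‖Real.exp (-L)‖ < 1 := by
    rw [Real.norm_eq_abs, abs_of_pos (Real.exp_pos _)]
    have := Real.exp_lt_exp.mpr (neg_lt_zero.mpr hL)
    simpa using this
  refine Summable.of_nonneg_of_le (fun m => ?_) (fun m => ?_)
    (summable_pow_mul_geometric_of_norm_lt_one z hlt)
  · exact mul_nonneg (mul_nonneg (by positivity) (Real.exp_nonneg _)) (nhGcpPmf_nonneg hrho m)
  · calc (m:ℝ)^z * Real.exp (-(L*m)) * nhGcpPmf k0 rho m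
        ≤ (m:ℝ)^z * Real.exp (-(L*m)) * 1 :=
          mul_le_mul_of_nonneg_left (nhGcpPmf_le_one hrho m) (by positivity)
      _ = (m:ℝ)^z * Real.exp (-L) ^ m := by
          rw [mul_one, show -(L*(m:ℝ)) = (m:ℝ) * (-L) by ring, Real.exp_nat_mul]

lemma bellPoly_nonneg (r : ℕ) {x : ℝ} (hx : 0 ≤ x) : 0 ≤ bellPoly r x :=
  mul_nonneg (Real.exp_nonneg _) (tsum_nonneg fun y => by positivity)

lemma tsum_bell (r : ℕ) {x : ℝ} (hx : 0 ≤ x) :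
    ∑' m : ℕ, (m:ℝ)^r * x^m / (Nat.factorial m) = Real.exp x * bellPoly r x := by
  rw [bellPoly, ← mul_assoc, ← Real.exp_add]
  simp

lemma aux_R1 (k0 : ℕ) (rho : Fin k0 → ℝ) (L : ℝ) (z : ℕ) (y : Fin k0 → ℕ) :
    ((∑ j0 : Fin k0, ((j0:ℕ)+1) * y j0 : ℕ):ℝ)^z *
      Real.exp (-(L * ((∑ j0 : Fin k0, ((j0:ℕ)+1) * y j0 : ℕ):ℝ))) *
      ∏ j0 : Fin k0, rho j0 ^ (y j0) / (Nat.factorial (y j0)) * Real.exp (-(rho j0))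
    = ((∑ j0 : Fin k0, ((j0:ℕ)+1) * y j0 : ℕ):ℝ)^z *
      ∏ j0 : Fin k0, (rho j0 * Real.exp (-(((j0:ℕ)+1:ℝ) * L))) ^ (y j0) /
        (Nat.factorial (y j0)) * Real.exp (-(rho j0)) := by
  have hexp : Real.exp (-(L * ((∑ j0 : Fin k0, ((j0:ℕ)+1) * y j0 : ℕ):ℝ)))
      = ∏ j0 : Fin k0, (Real.exp (-(((j0:ℕ)+1:ℝ) * L))) ^ (y j0) := by
    rw [show -(L * ((∑ j0 : Fin k0, ((j0:ℕ)+1) * y j0 : ℕ):ℝ))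
        = ∑ j0 : Fin k0, ((y j0 : ℕ):ℝ) * (-(((j0:ℕ)+1:ℝ) * L)) by
      push_cast
      rw [Finset.mul_sum, ← Finset.sum_neg_distrib]
      exact Finset.sum_congr rfl fun j0 _ => by ring]
    rw [Real.exp_sum]
    exact Finset.prod_congr rfl fun j0 _ => Real.exp_nat_mul _ _
  rw [hexp, mul_assoc, ← Finset.prod_mul_distrib]
  congr 1
  refine Finset.prod_congr rfl fun j0 _ => ?_
  rw [mul_pow]
  ring

lemma core1 (k0 : ℕ) (rho : Fin k0 → ℝ) (hrho : ∀ j0, 0 ≤ rho j0) (L : ℝ) (hL : 0 < L)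
    (z : ℕ) :
    ∑' m : ℕ, (m:ℝ)^z * Real.exp (-(L * m)) * nhGcpPmf k0 rho m
    = (∑' y : Fin k0 → ℕ, ENNReal.ofReal
        (((∑ j0 : Fin k0, ((j0:ℕ)+1) * y j0 : ℕ):ℝ)^z *
          ∏ j0 : Fin k0, (rho j0 * Real.exp (-(((j0:ℕ)+1:ℝ) * L))) ^ (y j0) /
            (Nat.factorial (y j0)) * Real.exp (-(rho j0)))).toReal := by
  have hf0 : ∀ m : ℕ, 0 ≤ (m:ℝ)^z * Real.exp (-(L * m)) * nhGcpPmf k0 rho m := fun m =>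
    mul_nonneg (mul_nonneg (by positivity) (Real.exp_nonneg _)) (nhGcpPmf_nonneg hrho m)
  rw [← ENNReal.toReal_ofReal (tsum_nonneg hf0),
    ENNReal.ofReal_tsum_of_nonneg hf0 (aux_summable_m hrho hL z)]
  congr 1
  calc ∑' m : ℕ, ENNReal.ofReal ((m:ℝ)^z * Real.exp (-(L * m)) * nhGcpPmf k0 rho m)
      = ∑' (m : ℕ) (y : Fin k0 → ℕ),
          (if (∑ j0 : Fin k0, ((j0:ℕ)+1) * y j0) = m then ENNReal.ofReal
            (((∑ j0 : Fin k0, ((j0:ℕ)+1) * y j0 : ℕ):ℝ)^z *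
              ∏ j0 : Fin k0, (rho j0 * Real.exp (-(((j0:ℕ)+1:ℝ) * L))) ^ (y j0) /
                (Nat.factorial (y j0)) * Real.exp (-(rho j0)))
          else 0) := by
        refine tsum_congr fun m => ?_
        rw [nhGcpPmf_eq_sum, Finset.mul_sum,
          tsum_eq_sum (s := Fintype.piFinset fun _ : Fin k0 => Finset.range (m+1))
            (fun y hy => if_neg fun h => hy (aux_mem_box h))]
        rw [ENNReal.ofReal_sum_of_nonneg]
        · refine Finset.sum_congr rfl fun y _ => ?_
          by_cases h : (∑ j0 : Fin k0, ((j0:ℕ)+1) * y j0) = m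
          · rw [if_pos h, ← h, aux_R1, if_pos rfl]
          · rw [if_neg h, mul_zero, ENNReal.ofReal_zero, if_neg h]
        · intro y _
          split
          · exact mul_nonneg (mul_nonneg (by positivity) (Real.exp_nonneg _))
              (nhGcpPmf_term_nonneg hrho y)
          · rw [mul_zero]
    _ = ∑' (y : Fin k0 → ℕ) (m : ℕ),
          (if (∑ j0 : Fin k0, ((j0:ℕ)+1) * y j0) = m then ENNReal.ofReal
            (((∑ j0 : Fin k0, ((j0:ℕ)+1) * y j0 : ℕ):ℝ)^z *
              ∏ j0 : Fin k0, (rho j0 * Real.exp (-(((j0:ℕ)+1:ℝ) * L))) ^ (y j0) /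
                (Nat.factorial (y j0)) * Real.exp (-(rho j0)))
          else 0) := ENNReal.tsum_comm
    _ = _ := by
        refine tsum_congr fun y => ?_
        rw [tsum_eq_single (∑ j0 : Fin k0, ((j0:ℕ)+1) * y j0)
          (fun m hm => if_neg fun h => hm h.symm)]
        rw [if_pos rfl]

lemma aux_Sval (rr : ℕ) {x : ℝ} (hx : 0 ≤ x) (v : ℝ) :
    ∑' m : ℕ, (m : ENNReal)^rr * ENNReal.ofReal (x^m / (Nat.factorial m) * Real.exp (-v))
    = ENNReal.ofReal (Real.exp x * bellPoly rr x * Real.exp (-v)) := by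
  have hs : Summable (fun m : ℕ => (m:ℝ)^rr * (x^m / (Nat.factorial m) * Real.exp (-v))) := by
    refine ((aux_summable_pow rr hx).mul_right (Real.exp (-v))).congr fun m => by ring
  have h1 : ∀ m : ℕ, (m : ENNReal)^rr * ENNReal.ofReal (x^m / (Nat.factorial m) * Real.exp (-v))
      = ENNReal.ofReal ((m:ℝ)^rr * (x^m / (Nat.factorial m) * Real.exp (-v))) := by
    intro m
    conv_rhs => rw [ENNReal.ofReal_mul (show (0:ℝ) ≤ (m:ℝ)^rr by positivity),
      ENNReal.ofReal_pow (Nat.cast_nonneg m), ENNReal.ofReal_natCast]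
  rw [tsum_congr h1, ← ENNReal.ofReal_tsum_of_nonneg (fun m => by positivity) hs]
  congr 1
  calc ∑' m : ℕ, (m:ℝ)^rr * (x^m / (Nat.factorial m) * Real.exp (-v))
      = ∑' m : ℕ, ((m:ℝ)^rr * x^m / (Nat.factorial m)) * Real.exp (-v) :=
        tsum_congr fun m => by ring
    _ = (∑' m : ℕ, (m:ℝ)^rr * x^m / (Nat.factorial m)) * Real.exp (-v) := tsum_mul_right
    _ = Real.exp x * bellPoly rr x * Real.exp (-v) := by rw [tsum_bell rr hx]

lemma aux_alg (K : ℕ) (r : Fin K → ℕ) (A : Fin K → ℝ) (z : ℕ) (h : ∑ j : Fin K, r j = z) :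
    (Nat.factorial z : ℝ) * ∏ j, A j / (Nat.factorial (r j))
    = (Nat.multinomial Finset.univ r : ℝ) * ∏ j, A j := by
  have hs := Nat.multinomial_spec Finset.univ r
  rw [h] at hs
  have hcast : ((Nat.factorial z : ℕ) : ℝ)
      = (∏ j, (Nat.factorial (r j) : ℝ)) * (Nat.multinomial Finset.univ r : ℝ) := by
    rw [← hs]; push_cast; ring
  have hne : (∏ j, (Nat.factorial (r j) : ℝ)) ≠ 0 :=
    Finset.prod_ne_zero_iff.mpr fun j _ => Nat.cast_ne_zero.mpr (Nat.factorial_ne_zero _)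
  rw [Finset.prod_div_distrib, hcast]
  field_simp

lemma core2 (k0 : ℕ) (rho : Fin k0 → ℝ) (hrho : ∀ j0, 0 ≤ rho j0) (L : ℝ) (z : ℕ) :
    (∑' y : Fin k0 → ℕ, ENNReal.ofReal
        (((∑ j0 : Fin k0, ((j0:ℕ)+1) * y j0 : ℕ):ℝ)^z *
          ∏ j0 : Fin k0, (rho j0 * Real.exp (-(((j0:ℕ)+1:ℝ) * L))) ^ (y j0) /
            (Nat.factorial (y j0)) * Real.exp (-(rho j0)))).toReal
    = ∑' r : Fin k0 → ℕ,
        if (∑ j0 : Fin k0, r j0) = z then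
          (Nat.factorial z : ℝ) *
            ∏ j0 : Fin k0,
              (((j0 : ℕ) + 1 : ℝ) ^ (r j0) / (Nat.factorial (r j0))) *
                Real.exp (-(rho j0 * (1 - Real.exp (-(((j0 : ℕ) + 1 : ℝ) * L))))) *
                bellPoly (r j0) (rho j0 * Real.exp (-(((j0 : ℕ) + 1 : ℝ) * L)))
        else 0 := by
  set c : Fin k0 → ℝ := fun j0 => rho j0 * Real.exp (-(((j0:ℕ)+1:ℝ) * L)) with hcdef
  have hc : ∀ j0, 0 ≤ c j0 := fun j0 => mul_nonneg (hrho j0) (Real.exp_nonneg _)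
  set F : Fin k0 → ℕ → ENNReal := fun j0 m =>
    ENNReal.ofReal ((c j0)^m / (Nat.factorial m) * Real.exp (-(rho j0))) with hFdef
  -- the value of each one-dimensional sum
  have hS : ∀ j0 : Fin k0, ∀ rr : ℕ,
      ∑' m : ℕ, (m : ENNReal)^rr * F j0 m
        = ENNReal.ofReal (Real.exp (c j0) * bellPoly rr (c j0) * Real.exp (-(rho j0))) :=
    fun j0 rr => aux_Sval rr (hc j0) (rho j0)
  -- nonnegativity of the real atoms
  have hbell : ∀ j0 rr, 0 ≤ Real.exp (c j0) * bellPoly rr (c j0) * Real.exp (-(rho j0)) :=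
    fun j0 rr => mul_nonneg (mul_nonneg (Real.exp_nonneg _) (bellPoly_nonneg rr (hc j0)))
      (Real.exp_nonneg _)
  have hA : ∀ (r : Fin k0 → ℕ) (j0 : Fin k0), 0 ≤ (((j0:ℕ)+1:ℝ))^(r j0) *
      (Real.exp (c j0) * bellPoly (r j0) (c j0) * Real.exp (-(rho j0))) :=
    fun r j0 => mul_nonneg (by positivity) (hbell j0 (r j0))
  have hv : ∀ r : Fin k0 → ℕ, 0 ≤ (Nat.multinomial Finset.univ r : ℝ) *
      ∏ j0 : Fin k0, (((j0:ℕ)+1:ℝ))^(r j0) *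
        (Real.exp (c j0) * bellPoly (r j0) (c j0) * Real.exp (-(rho j0))) :=
    fun r => mul_nonneg (Nat.cast_nonneg _) (Finset.prod_nonneg fun j0 _ => hA r j0)
  have hpow : ∀ (j0 : Fin k0) (rr : ℕ) (X : ℝ), 0 ≤ X →
      ENNReal.ofReal ((((j0:ℕ)+1:ℝ))^rr * X) = (((j0:ℕ):ENNReal)+1)^rr * ENNReal.ofReal X := by
    intro j0 rr X hX
    rw [ENNReal.ofReal_mul (show (0:ℝ) ≤ (((j0:ℕ)+1:ℝ))^rr by positivity)]
    congr 1
    rw [show (((j0:ℕ)+1:ℝ))^rr = ((((j0:ℕ)+1)^rr : ℕ) : ℝ) by push_cast; ring,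
      ENNReal.ofReal_natCast]
    push_cast
    ring
  have key : (∑' y : Fin k0 → ℕ, ENNReal.ofReal
        (((∑ j0 : Fin k0, ((j0:ℕ)+1) * y j0 : ℕ):ℝ)^z *
          ∏ j0 : Fin k0, (c j0) ^ (y j0) /
            (Nat.factorial (y j0)) * Real.exp (-(rho j0))))
      = ENNReal.ofReal (∑ r ∈ Finset.piAntidiag Finset.univ z,
          (Nat.multinomial Finset.univ r : ℝ) *
            ∏ j0 : Fin k0, (((j0:ℕ)+1:ℝ))^(r j0) *
              (Real.exp (c j0) * bellPoly (r j0) (c j0) * Real.exp (-(rho j0)))) := by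
    calc ∑' y : Fin k0 → ℕ, ENNReal.ofReal
          (((∑ j0 : Fin k0, ((j0:ℕ)+1) * y j0 : ℕ):ℝ)^z *
            ∏ j0 : Fin k0, (c j0) ^ (y j0) /
              (Nat.factorial (y j0)) * Real.exp (-(rho j0)))
        = ∑' y : Fin k0 → ℕ,
            ((∑ j0 : Fin k0, ((j0:ℕ)+1) * y j0 : ℕ) : ENNReal)^z * ∏ j0 : Fin k0, F j0 (y j0) := by
          refine tsum_congr fun y => ?_
          rw [ENNReal.ofReal_mul (by positivity), ENNReal.ofReal_pow (Nat.cast_nonneg _),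
            ENNReal.ofReal_natCast, ENNReal.ofReal_prod_of_nonneg (fun j0 _ => by
              exact mul_nonneg (div_nonneg (pow_nonneg (hc j0) _) (by positivity))
                (Real.exp_nonneg _))]
      _ = ∑' y : Fin k0 → ℕ, ∑ r ∈ Finset.piAntidiag Finset.univ z,
            (Nat.multinomial Finset.univ r : ENNReal) *
              ∏ j0 : Fin k0, ((((j0:ℕ):ENNReal)+1)^(r j0) * (y j0 : ENNReal)^(r j0) * F j0 (y j0)) := by
          refine tsum_congr fun y => ?_
          rw [show ((∑ j0 : Fin k0, ((j0:ℕ)+1) * y j0 : ℕ) : ENNReal)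
              = ∑ j0 : Fin k0, (((j0:ℕ):ENNReal)+1) * (y j0 : ENNReal) by push_cast; rfl,
            Finset.sum_pow_eq_sum_piAntidiag, Finset.sum_mul]
          refine Finset.sum_congr rfl fun r _ => ?_
          rw [mul_assoc, ← Finset.prod_mul_distrib]
          congr 1
          exact Finset.prod_congr rfl fun j0 _ => by rw [mul_pow]
      _ = ∑ r ∈ Finset.piAntidiag Finset.univ z,
            (Nat.multinomial Finset.univ r : ENNReal) *
              ∏ j0 : Fin k0, ((((j0:ℕ):ENNReal)+1)^(r j0) *
                ENNReal.ofReal (Real.exp (c j0) * bellPoly (r j0) (c j0) * Real.exp (-(rho j0)))) := by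
          rw [Summable.tsum_finsetSum (fun r _ => ENNReal.summable)]
          refine Finset.sum_congr rfl fun r _ => ?_
          rw [ENNReal.tsum_mul_left]
          congr 1
          rw [aux_tsum_pi_prod k0 (fun j0 m => (((j0:ℕ):ENNReal)+1)^(r j0) * (m : ENNReal)^(r j0) * F j0 m)]
          refine Finset.prod_congr rfl fun j0 _ => ?_
          rw [show (∑' m : ℕ, (((j0:ℕ):ENNReal)+1)^(r j0) * (m : ENNReal)^(r j0) * F j0 m)
              = (((j0:ℕ):ENNReal)+1)^(r j0) * ∑' m : ℕ, (m : ENNReal)^(r j0) * F j0 m by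
            rw [← ENNReal.tsum_mul_left]; exact tsum_congr fun m => mul_assoc _ _ _]
          rw [hS j0 (r j0)]
      _ = ENNReal.ofReal (∑ r ∈ Finset.piAntidiag Finset.univ z,
            (Nat.multinomial Finset.univ r : ℝ) *
              ∏ j0 : Fin k0, (((j0:ℕ)+1:ℝ))^(r j0) *
                (Real.exp (c j0) * bellPoly (r j0) (c j0) * Real.exp (-(rho j0)))) := by
          rw [ENNReal.ofReal_sum_of_nonneg (fun r _ => hv r)]
          refine Finset.sum_congr rfl fun r _ => ?_
          rw [ENNReal.ofReal_mul (Nat.cast_nonneg _), ENNReal.ofReal_natCast,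
            ENNReal.ofReal_prod_of_nonneg (fun j0 _ => hA r j0)]
          congr 1
          exact Finset.prod_congr rfl fun j0 _ => (hpow j0 (r j0) _ (hbell j0 (r j0))).symm
  rw [key, ENNReal.toReal_ofReal (Finset.sum_nonneg fun r _ => hv r)]
  rw [tsum_eq_sum (s := Fintype.piFinset fun _ : Fin k0 => Finset.range (z+1))
    (fun r hr => if_neg fun h => hr (aux_mem_box2 h)), ← Finset.sum_filter]
  rw [show Finset.filter (fun r : Fin k0 → ℕ => (∑ j0 : Fin k0, r j0) = z)
      (Fintype.piFinset fun _ : Fin k0 => Finset.range (z+1))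
      = Finset.piAntidiag Finset.univ z by
    ext r
    simp only [Finset.mem_filter, Finset.mem_piAntidiag, Finset.mem_univ, implies_true, and_true]
    exact ⟨fun h => h.2, fun h => ⟨aux_mem_box2 h, h⟩⟩]
  refine Finset.sum_congr rfl fun r hr => ?_
  have hsum : ∑ j0 : Fin k0, r j0 = z := (Finset.mem_piAntidiag.mp hr).1
  rw [show (∏ j0 : Fin k0, (((j0:ℕ)+1:ℝ))^(r j0) / (Nat.factorial (r j0)) *
        Real.exp (-(rho j0 * (1 - Real.exp (-(((j0:ℕ)+1:ℝ) * L))))) * bellPoly (r j0) (c j0))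
      = ∏ j0 : Fin k0, ((((j0:ℕ)+1:ℝ))^(r j0) *
          (Real.exp (c j0) * bellPoly (r j0) (c j0) * Real.exp (-(rho j0)))) /
            (Nat.factorial (r j0)) from
    Finset.prod_congr rfl fun j0 _ => by
      rw [show Real.exp (-(rho j0 * (1 - Real.exp (-(((j0:ℕ)+1:ℝ) * L)))))
          = Real.exp (c j0) * Real.exp (-(rho j0)) by
        rw [← Real.exp_add]; congr 1; simp only [hcdef]; ring]
      ring]
  exact (aux_alg k0 r _ z hsum).symm

lemma core (k0 : ℕ) (rho : Fin k0 → ℝ) (hrho : ∀ j0, 0 ≤ rho j0) (L : ℝ) (hL : 0 < L)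
    (z : ℕ) :
    ∑' m : ℕ, (m:ℝ)^z * Real.exp (-(L * m)) * nhGcpPmf k0 rho m
    = ∑' r : Fin k0 → ℕ,
        if (∑ j0 : Fin k0, r j0) = z then
          (Nat.factorial z : ℝ) *
            ∏ j0 : Fin k0,
              (((j0 : ℕ) + 1 : ℝ) ^ (r j0) / (Nat.factorial (r j0))) *
                Real.exp (-(rho j0 * (1 - Real.exp (-(((j0 : ℕ) + 1 : ℝ) * L))))) *
                bellPoly (r j0) (rho j0 * Real.exp (-(((j0 : ℕ) + 1 : ℝ) * L)))
        else 0 :=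
  (core1 k0 rho hrho L hL z).trans (core2 k0 rho hrho L z)

lemma aux_P (k : ℕ) (lam : Fin k → ℝ) (x : Fin k → ℕ) (m : ℕ) :
    (∏ j : Fin k, (lam j * (m:ℝ)) ^ (x j) / (Nat.factorial (x j)) * Real.exp (-(lam j * m)))
    = (∏ j : Fin k, lam j ^ (x j) / (Nat.factorial (x j))) *
      ((m:ℝ)^(∑ j : Fin k, x j) * Real.exp (-((∑ j : Fin k, lam j) * m))) := by
  have h1 : Real.exp (-((∑ j : Fin k, lam j) * (m:ℝ)))
      = ∏ j : Fin k, Real.exp (-(lam j * m)) := by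
    rw [← Real.exp_sum]
    congr 1
    rw [Finset.sum_mul, ← Finset.sum_neg_distrib]
  rw [h1, ← Finset.prod_pow_eq_pow_sum, ← Finset.prod_mul_distrib, ← Finset.prod_mul_distrib]
  exact Finset.prod_congr rfl fun j _ => by rw [mul_pow]; ring


/-- state probabilities of the non-homogeneous IGCP in terms of Bell
polynomials. -/
theorem nhIgcp_pmf_bell (k : ℕ) (hk : 0 < k) (lam : Fin k → ℝ) (hlam : ∀ j, 0 < lam j)
    (k0 : ℕ) (hk0 : 0 < k0) (rho : Fin k0 → ℝ) (hrho : ∀ j0, 0 ≤ rho j0) (n : ℕ) :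
    nhIgcpPmf k lam k0 rho n =
      ∑' nv : Fin k → ℕ,
        if (∑ j : Fin k, ((j : ℕ) + 1) * nv j) = n then
          (∏ j : Fin k, lam j ^ (nv j) / (Nat.factorial (nv j))) *
            ∑' r : Fin k0 → ℕ,
              if (∑ j0 : Fin k0, r j0) = (∑ j : Fin k, nv j) then
                (Nat.factorial (∑ j : Fin k, nv j) : ℝ) *
                  ∏ j0 : Fin k0,
                    (((j0 : ℕ) + 1 : ℝ) ^ (r j0) / (Nat.factorial (r j0))) *
                      Real.exp (-(rho j0 *
                        (1 - Real.exp (-(((j0 : ℕ) + 1 : ℝ) * ∑ j : Fin k, lam j))))) *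
                      bellPoly (r j0)
                        (rho j0 * Real.exp (-(((j0 : ℕ) + 1 : ℝ) * ∑ j : Fin k, lam j)))
              else 0
        else 0 := by
  
  have : Nonempty (Fin k) := ⟨⟨0, hk⟩⟩
  have hL : 0 < ∑ j : Fin k, lam j := Finset.sum_pos (fun j _ => hlam j) Finset.univ_nonempty
  calc nhIgcpPmf k lam k0 rho n
      = ∑' m : ℕ, (∑ x ∈ Fintype.piFinset (fun _ : Fin k => Finset.range (n+1)),
          (if (∑ j : Fin k, ((j : ℕ) + 1) * x j) = n then
            ∏ j : Fin k, (lam j * (m:ℝ)) ^ (x j) / (Nat.factorial (x j)) *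
              Real.exp (-(lam j * m))
          else 0)) * nhGcpPmf k0 rho m := by
        rw [nhIgcpPmf]
        exact tsum_congr fun m => by rw [gcpPmf_eq_sum]
    _ = ∑' m : ℕ, ∑ x ∈ Fintype.piFinset (fun _ : Fin k => Finset.range (n+1)),
          (if (∑ j : Fin k, ((j : ℕ) + 1) * x j) = n then
            ∏ j : Fin k, lam j ^ (x j) / (Nat.factorial (x j)) else 0) *
          ((m:ℝ)^(∑ j : Fin k, x j) * Real.exp (-((∑ j : Fin k, lam j) * m)) *
            nhGcpPmf k0 rho m) := by
        refine tsum_congr fun m => ?_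
        rw [Finset.sum_mul]
        refine Finset.sum_congr rfl fun x _ => ?_
        by_cases h : (∑ j : Fin k, ((j : ℕ) + 1) * x j) = n
        · rw [if_pos h, if_pos h, aux_P]; ring
        · rw [if_neg h, if_neg h, zero_mul, zero_mul]
    _ = ∑ x ∈ Fintype.piFinset (fun _ : Fin k => Finset.range (n+1)),
          (if (∑ j : Fin k, ((j : ℕ) + 1) * x j) = n then
            ∏ j : Fin k, lam j ^ (x j) / (Nat.factorial (x j)) else 0) *
          ∑' m : ℕ, ((m:ℝ)^(∑ j : Fin k, x j) * Real.exp (-((∑ j : Fin k, lam j) * m)) *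
            nhGcpPmf k0 rho m) := by
        rw [Summable.tsum_finsetSum (fun x _ => Summable.mul_left _ (aux_summable_m hrho hL _))]
        exact Finset.sum_congr rfl fun x _ => tsum_mul_left
    _ = ∑ x ∈ Fintype.piFinset (fun _ : Fin k => Finset.range (n+1)),
          (if (∑ j : Fin k, ((j : ℕ) + 1) * x j) = n then
            (∏ j : Fin k, lam j ^ (x j) / (Nat.factorial (x j))) *
              ∑' r : Fin k0 → ℕ,
                if (∑ j0 : Fin k0, r j0) = (∑ j : Fin k, x j) then
                  (Nat.factorial (∑ j : Fin k, x j) : ℝ) *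
                    ∏ j0 : Fin k0,
                      (((j0 : ℕ) + 1 : ℝ) ^ (r j0) / (Nat.factorial (r j0))) *
                        Real.exp (-(rho j0 *
                          (1 - Real.exp (-(((j0 : ℕ) + 1 : ℝ) * ∑ j : Fin k, lam j))))) *
                        bellPoly (r j0)
                          (rho j0 * Real.exp (-(((j0 : ℕ) + 1 : ℝ) * ∑ j : Fin k, lam j)))
                else 0
          else 0) := by
        refine Finset.sum_congr rfl fun x _ => ?_
        by_cases h : (∑ j : Fin k, ((j : ℕ) + 1) * x j) = n
        · rw [if_pos h, if_pos h, core k0 rho hrho _ hL (∑ j : Fin k, x j)]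
        · rw [if_neg h, if_neg h, zero_mul]
    _ = _ :=
        (tsum_eq_sum (fun x hx => if_neg fun h => hx (aux_mem_box h))).symm
end

section
/- For every n̄ = (n₁,…,n_q) ∈ ℕ₀^q and t ≥ 0, p̂(n̄,t) = Σ over tuples ((n_{i1},…,n_{ik_i}) ∈ Ω(k_i,n_i) for each i = 1,…,q) of (Π_{i=1}^q Π_{j_i=1}^{k_i} λ_{ij_i}^{n_{ij_i}}/n_{ij_i}!) · Σ_{m=0}^∞ m^{Σ_{i=1}^q Σ_{j_i=1}^{k_i} n_{ij_i}} · Σ_{(x₁,…,x_{k₀})∈Ω(k₀,m)} Π_{j₀=1}^{k₀} ((μ_{j₀} e^{−j₀Λ} t)^{x_{j₀}}/x_{j₀}!) e^{−μ_{j₀} t}. -/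
open scoped ENNReal NNReal
open ENNReal

/-- Multivariate IGCP state probabilities:
`p̂(n̄,t) = ∑_{m=0}^∞ (∏_i p_i(n_i,m)) p₀(m,t)`. -/
noncomputable def mvIgcpPmf (q : ℕ) (K : Fin q → ℕ) (L : (i : Fin q) → Fin (K i) → ℝ)
    (k0 : ℕ) (mu : Fin k0 → ℝ) (n : Fin q → ℕ) (t : ℝ) : ℝ :=
  ∑' m : ℕ, (∏ i : Fin q, gcpPmf (K i) (L i) (n i) m) * gcpPmf k0 mu m t

lemma bridge {ι : Type*} (f : ι → ℝ) (hf : ∀ i, 0 ≤ f i) :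
    ∑' i, f i = (∑' i, ENNReal.ofReal (f i)).toReal := by
  by_cases h : Summable f
  · rw [← ENNReal.ofReal_tsum_of_nonneg hf h, ENNReal.toReal_ofReal (tsum_nonneg hf)]
  · rw [tsum_eq_zero_of_not_summable h]
    have hcoe : ∀ i, ENNReal.ofReal (f i) = ((f i).toNNReal : ℝ≥0∞) := fun i => rfl
    rw [tsum_congr hcoe]
    have hns : ¬ Summable (fun i => (f i).toNNReal) := by
      intro hs
      apply h
      have h2 := NNReal.summable_coe.mpr hs
      exact h2.congr (fun i => Real.coe_toNNReal _ (hf i))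
    rw [not_not.mp (ENNReal.tsum_coe_ne_top_iff_summable.not.mpr hns)]
    simp

lemma prod_tsum_pi : ∀ (q : ℕ) (τ : Fin q → Type) (f : ∀ i, τ i → ℝ≥0∞),
    ∏ i, ∑' x, f i x = ∑' x : ∀ i, τ i, ∏ i, f i (x i) := by
  intro q
  induction q with
  | zero =>
    intro τ f
    rw [tsum_eq_single (default : ∀ i : Fin 0, τ i)
      (fun b hb => absurd (Subsingleton.elim b default) hb)]
    simp
  | succ q ih =>
    intro τ f
    calc ∏ i, ∑' x, f i x
        = (∑' a : τ 0, f 0 a) *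
            ∑' b : (∀ i : Fin q, τ i.succ), ∏ i, f i.succ (b i) := by
          rw [Fin.prod_univ_succ, ih]
      _ = ∑' (a : τ 0) (b : ∀ i : Fin q, τ i.succ), f 0 a * ∏ i, f i.succ (b i) := by
          rw [← ENNReal.tsum_mul_right]
          exact tsum_congr fun a => (ENNReal.tsum_mul_left).symm
      _ = ∑' p : τ 0 × (∀ i : Fin q, τ i.succ), f 0 p.1 * ∏ i, f i.succ (p.2 i) :=
          (ENNReal.tsum_prod' (f := fun p : τ 0 × (∀ i : Fin q, τ i.succ) =>
            f 0 p.1 * ∏ i, f i.succ (p.2 i))).symm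
      _ = ∑' x : ∀ i, τ i, ∏ i, f i (x i) := by
          rw [← (Fin.consEquiv τ).tsum_eq]
          exact tsum_congr fun p => by simp [Fin.prod_univ_succ]

lemma prod_ite_zero {q : ℕ} (c : Fin q → Prop) [∀ i, Decidable (c i)] (A : Fin q → ℝ≥0∞) :
    ∏ i, (if c i then A i else 0) = if (∀ i, c i) then ∏ i, A i else 0 := by
  by_cases h : ∀ i, c i
  · rw [if_pos h]; exact Finset.prod_congr rfl fun i _ => if_pos (h i)
  · rw [if_neg h]
    push_neg at h
    obtain ⟨i, hi⟩ := h
    exact Finset.prod_eq_zero (Finset.mem_univ i) (if_neg hi)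

lemma real_factor (k : ℕ) (lam : Fin k → ℝ) (t : ℝ) (x : Fin k → ℕ) :
    ∏ j, ((lam j * t) ^ (x j) / (Nat.factorial (x j)) * Real.exp (-(lam j * t)))
      = (∏ j, lam j ^ (x j) / (Nat.factorial (x j))) * t ^ (∑ j, x j) *
          Real.exp (-(t * ∑ j, lam j)) := by
  have h1 : ∀ j ∈ Finset.univ, (lam j * t) ^ (x j) / (Nat.factorial (x j)) *
      Real.exp (-(lam j * t)) =
      lam j ^ (x j) / (Nat.factorial (x j)) * t ^ (x j) * Real.exp (-(lam j * t)) := by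
    intro j _; rw [mul_pow]; ring
  rw [Finset.prod_congr rfl h1, Finset.prod_mul_distrib, Finset.prod_mul_distrib,
    Finset.prod_pow_eq_pow_sum, ← Real.exp_sum]
  congr 2
  rw [Finset.mul_sum, ← Finset.sum_neg_distrib]
  exact Finset.sum_congr rfl fun j _ => by ring

lemma real_factor2 (k0 : ℕ) (mu : Fin k0 → ℝ) (t Λ : ℝ) (y : Fin k0 → ℕ) (m : ℕ)
    (hm : ∑ j0 : Fin k0, ((j0 : ℕ) + 1) * y j0 = m) :
    ∏ j0, ((mu j0 * Real.exp (-(((j0 : ℕ) + 1 : ℝ) * Λ)) * t) ^ (y j0) /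
        (Nat.factorial (y j0)) * Real.exp (-(mu j0 * t)))
      = Real.exp (-((m : ℝ) * Λ)) *
          ∏ j0, ((mu j0 * t) ^ (y j0) / (Nat.factorial (y j0)) * Real.exp (-(mu j0 * t))) := by
  have h1 : ∀ j0 ∈ Finset.univ, (mu j0 * Real.exp (-(((j0 : ℕ) + 1 : ℝ) * Λ)) * t) ^ (y j0) /
      (Nat.factorial (y j0)) * Real.exp (-(mu j0 * t)) =
      Real.exp ((y j0 : ℝ) * -(((j0 : ℕ) + 1 : ℝ) * Λ)) *
        ((mu j0 * t) ^ (y j0) / (Nat.factorial (y j0)) * Real.exp (-(mu j0 * t))) := by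
    intro j0 _
    rw [Real.exp_nat_mul, show mu j0 * Real.exp (-(((j0 : ℕ) + 1 : ℝ) * Λ)) * t =
      (mu j0 * t) * Real.exp (-(((j0 : ℕ) + 1 : ℝ) * Λ)) from by ring, mul_pow]
    ring
  rw [Finset.prod_congr rfl h1, Finset.prod_mul_distrib, ← Real.exp_sum]
  congr 2
  rw [← hm]
  push_cast
  rw [Finset.sum_mul, ← Finset.sum_neg_distrib]
  exact Finset.sum_congr rfl fun j _ => by ring

/-- ENNReal version of `gcpPmf`. -/
noncomputable def gE (k : ℕ) (lam : Fin k → ℝ) (n : ℕ) (t : ℝ) : ℝ≥0∞ :=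
  ∑' x : Fin k → ℕ,
    if (∑ j : Fin k, ((j : ℕ) + 1) * x j) = n then
      ∏ j : Fin k, ENNReal.ofReal
        ((lam j * t) ^ (x j) / (Nat.factorial (x j)) * Real.exp (-(lam j * t)))
    else 0

lemma gcpPmf_eq_toReal (k : ℕ) (lam : Fin k → ℝ) (hlam : ∀ j, 0 ≤ lam j) (n : ℕ) (t : ℝ)
    (ht : 0 ≤ t) : gcpPmf k lam n t = (gE k lam n t).toReal := by
  have hnn : ∀ x : Fin k → ℕ, 0 ≤ if (∑ j : Fin k, ((j : ℕ) + 1) * x j) = n then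
      ∏ j : Fin k, (lam j * t) ^ (x j) / (Nat.factorial (x j)) * Real.exp (-(lam j * t))
    else 0 := by
    intro x
    split_ifs
    · exact Finset.prod_nonneg fun j _ => mul_nonneg
        (div_nonneg (pow_nonneg (mul_nonneg (hlam j) ht) _) (Nat.cast_nonneg _))
        (Real.exp_nonneg _)
    · exact le_refl 0
  rw [gcpPmf, bridge _ hnn, gE]
  congr 1
  refine tsum_congr fun x => ?_
  split_ifs
  · exact ENNReal.ofReal_prod_of_nonneg fun j _ => mul_nonneg
      (div_nonneg (pow_nonneg (mul_nonneg (hlam j) ht) _) (Nat.cast_nonneg _))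
      (Real.exp_nonneg _)
  · exact ENNReal.ofReal_zero

lemma tsum_poisson (c : ℝ) (hc : 0 ≤ c) :
    ∑' m : ℕ, ENNReal.ofReal (c ^ m / (Nat.factorial m) * Real.exp (-c)) = 1 := by
  rw [← ENNReal.ofReal_tsum_of_nonneg
    (fun m => mul_nonneg (div_nonneg (pow_nonneg hc _) (Nat.cast_nonneg _)) (Real.exp_nonneg _))
    ((Real.summable_pow_div_factorial c).mul_right _)]
  rw [tsum_mul_right]
  have : ∑' m : ℕ, c ^ m / (Nat.factorial m) = Real.exp c := by
    rw [Real.exp_eq_exp_ℝ, NormedSpace.exp_eq_tsum_div]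
  rw [this, ← Real.exp_add]
  simp

lemma gE_le_one (k : ℕ) (lam : Fin k → ℝ) (hlam : ∀ j, 0 ≤ lam j) (n : ℕ) (t : ℝ)
    (ht : 0 ≤ t) : gE k lam n t ≤ 1 := by
  rw [gE]
  calc (∑' x : Fin k → ℕ,
    if (∑ j : Fin k, ((j : ℕ) + 1) * x j) = n then
      ∏ j : Fin k, ENNReal.ofReal
        ((lam j * t) ^ (x j) / (Nat.factorial (x j)) * Real.exp (-(lam j * t)))
    else 0)
      ≤ ∑' x : Fin k → ℕ, ∏ j, ENNReal.ofReal
          ((lam j * t) ^ (x j) / (Nat.factorial (x j)) * Real.exp (-(lam j * t))) :=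
        ENNReal.tsum_le_tsum (fun x => by
          split_ifs
          exacts [le_rfl, zero_le])
    _ = ∏ j, ∑' m : ℕ, ENNReal.ofReal
          ((lam j * t) ^ m / (Nat.factorial m) * Real.exp (-(lam j * t))) :=
        (prod_tsum_pi k (fun _ => ℕ) (fun j m => ENNReal.ofReal
          ((lam j * t) ^ m / (Nat.factorial m) * Real.exp (-(lam j * t))))).symm
    _ = 1 := by
        rw [Finset.prod_congr rfl fun j _ => tsum_poisson _ (mul_nonneg (hlam j) ht)]
        simp

lemma tsum_ofReal_poisson_ne_top (a e : ℝ) (ha : 0 ≤ a) (he : 0 ≤ e) :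
    ∑' r : ℕ, ENNReal.ofReal (a ^ r / (Nat.factorial r) * e) ≠ ⊤ := by
  rw [← ENNReal.ofReal_tsum_of_nonneg
    (fun r => mul_nonneg (div_nonneg (pow_nonneg ha _) (Nat.cast_nonneg _)) he)
    ((Real.summable_pow_div_factorial a).mul_right e)]
  exact ENNReal.ofReal_ne_top

/-- ENNReal version of the inner `y`-sum on the right-hand side. -/
noncomputable def tE (k0 : ℕ) (mu : Fin k0 → ℝ) (Λ t : ℝ) (m : ℕ) : ℝ≥0∞ :=
  ∑' y : Fin k0 → ℕ,
    if (∑ j0 : Fin k0, ((j0 : ℕ) + 1) * y j0) = m then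
      ∏ j0 : Fin k0, ENNReal.ofReal
        ((mu j0 * Real.exp (-(((j0 : ℕ) + 1 : ℝ) * Λ)) * t) ^ (y j0) /
          (Nat.factorial (y j0)) * Real.exp (-(mu j0 * t)))
    else 0

lemma tE_nonneg_pt (k0 : ℕ) (mu : Fin k0 → ℝ) (hmu : ∀ j, 0 ≤ mu j) (Λ t : ℝ) (ht : 0 ≤ t) :
    ∀ (j0 : Fin k0) (r : ℕ), 0 ≤ (mu j0 * Real.exp (-(((j0 : ℕ) + 1 : ℝ) * Λ)) * t) ^ r /
      (Nat.factorial r) * Real.exp (-(mu j0 * t)) := fun j0 r =>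
  mul_nonneg (div_nonneg (pow_nonneg
    (mul_nonneg (mul_nonneg (hmu j0) (Real.exp_nonneg _)) ht) _) (Nat.cast_nonneg _))
    (Real.exp_nonneg _)

lemma tE_ne_top (k0 : ℕ) (mu : Fin k0 → ℝ) (hmu : ∀ j, 0 ≤ mu j) (Λ t : ℝ) (ht : 0 ≤ t)
    (m : ℕ) : tE k0 mu Λ t m ≠ ⊤ := by
  have hle : tE k0 mu Λ t m ≤ ∏ j0 : Fin k0, ∑' r : ℕ, ENNReal.ofReal
      ((mu j0 * Real.exp (-(((j0 : ℕ) + 1 : ℝ) * Λ)) * t) ^ r /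
        (Nat.factorial r) * Real.exp (-(mu j0 * t))) := by
    rw [tE, prod_tsum_pi k0 (fun _ => ℕ) (fun j0 r => ENNReal.ofReal
      ((mu j0 * Real.exp (-(((j0 : ℕ) + 1 : ℝ) * Λ)) * t) ^ r /
        (Nat.factorial r) * Real.exp (-(mu j0 * t))))]
    exact ENNReal.tsum_le_tsum (fun y => by split_ifs; exacts [le_rfl, zero_le])
  exact ne_top_of_le_ne_top
    (ENNReal.prod_lt_top (fun j0 _ => lt_top_iff_ne_top.mpr
      (tsum_ofReal_poisson_ne_top _ _
        (mul_nonneg (mul_nonneg (hmu j0) (Real.exp_nonneg _)) ht) (Real.exp_nonneg _)))).ne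
    hle

/-- Core pointwise rewrite of `gE` at time `t = m`. -/
lemma gE_eq (k : ℕ) (lam : Fin k → ℝ) (hlam : ∀ j, 0 ≤ lam j) (n m : ℕ) :
    gE k lam n (m : ℝ)
      = (∑' x : Fin k → ℕ,
          if (∑ j : Fin k, ((j : ℕ) + 1) * x j) = n then
            (∏ j : Fin k, ENNReal.ofReal (lam j ^ (x j) / (Nat.factorial (x j)))) *
              (m : ℝ≥0∞) ^ (∑ j, x j)
          else 0) * ENNReal.ofReal (Real.exp (-((m : ℝ) * ∑ j, lam j))) := by
  rw [gE, ← ENNReal.tsum_mul_right]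
  refine tsum_congr fun x => ?_
  split_ifs with h
  · rw [← ENNReal.ofReal_prod_of_nonneg (fun j _ => mul_nonneg
      (div_nonneg (pow_nonneg (mul_nonneg (hlam j) (Nat.cast_nonneg m)) _) (Nat.cast_nonneg _))
      (Real.exp_nonneg _)), real_factor k lam (m : ℝ) x,
      ENNReal.ofReal_mul (mul_nonneg
        (Finset.prod_nonneg fun j _ => div_nonneg (pow_nonneg (hlam j) _) (Nat.cast_nonneg _))
        (pow_nonneg (Nat.cast_nonneg m) _)),
      ENNReal.ofReal_mul
        (Finset.prod_nonneg fun j _ => div_nonneg (pow_nonneg (hlam j) _) (Nat.cast_nonneg _)),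
      ENNReal.ofReal_prod_of_nonneg
        (fun j _ => div_nonneg (pow_nonneg (hlam j) _) (Nat.cast_nonneg _)),
      ENNReal.ofReal_pow (Nat.cast_nonneg m), ENNReal.ofReal_natCast]
  · rw [zero_mul]

lemma tE_eq (k0 : ℕ) (mu : Fin k0 → ℝ) (hmu : ∀ j, 0 ≤ mu j) (Λ t : ℝ) (ht : 0 ≤ t) (m : ℕ) :
    tE k0 mu Λ t m = ENNReal.ofReal (Real.exp (-((m : ℝ) * Λ))) * gE k0 mu m t := by
  rw [tE, gE, ← ENNReal.tsum_mul_left]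
  refine tsum_congr fun y => ?_
  split_ifs with h
  · rw [← ENNReal.ofReal_prod_of_nonneg (fun j0 _ => tE_nonneg_pt k0 mu hmu Λ t ht j0 (y j0)),
      real_factor2 k0 mu t Λ y m h,
      ENNReal.ofReal_mul (Real.exp_nonneg _),
      ENNReal.ofReal_prod_of_nonneg (fun j0 _ => mul_nonneg (div_nonneg
        (pow_nonneg (mul_nonneg (hmu j0) ht) _) (Nat.cast_nonneg _)) (Real.exp_nonneg _))]
  · rw [mul_zero]


lemma pi_ite_bridge {k : ℕ} (c : (Fin k → ℕ) → Prop) [DecidablePred c] (g : Fin k → ℕ → ℝ)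
    (hg : ∀ j r, 0 ≤ g j r) :
    (∑' x : Fin k → ℕ, if c x then ∏ j, g j (x j) else 0)
      = (∑' x : Fin k → ℕ, if c x then ∏ j, ENNReal.ofReal (g j (x j)) else 0).toReal := by
  rw [bridge _ (fun x => by
    split_ifs with h
    exacts [Finset.prod_nonneg fun j _ => hg j (x j), le_refl 0])]
  congr 1
  refine tsum_congr fun x => ?_
  split_ifs
  · exact ENNReal.ofReal_prod_of_nonneg fun j _ => hg j (x j)
  · exact ENNReal.ofReal_zero

/-- explicit state probabilities of the multivariate IGCP. -/
theorem mvIgcp_pmf (q : ℕ) (hq : 0 < q) (K : Fin q → ℕ) (hK : ∀ i, 0 < K i)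
    (L : (i : Fin q) → Fin (K i) → ℝ) (hL : ∀ i j, 0 < L i j)
    (k0 : ℕ) (hk0 : 0 < k0) (mu : Fin k0 → ℝ) (hmu : ∀ j0, 0 < mu j0)
    (n : Fin q → ℕ) (t : ℝ) (ht : 0 ≤ t) :
    mvIgcpPmf q K L k0 mu n t =
      ∑' x : (i : Fin q) → Fin (K i) → ℕ,
        if (∀ i : Fin q, (∑ j : Fin (K i), ((j : ℕ) + 1) * x i j) = n i) then
          (∏ i : Fin q, ∏ j : Fin (K i), L i j ^ (x i j) / (Nat.factorial (x i j))) *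
            ∑' m : ℕ,
              (m : ℝ) ^ (∑ i : Fin q, ∑ j : Fin (K i), x i j) *
                ∑' y : Fin k0 → ℕ,
                  if (∑ j0 : Fin k0, ((j0 : ℕ) + 1) * y j0) = m then
                    ∏ j0 : Fin k0,
                      (mu j0 *
                          Real.exp (-(((j0 : ℕ) + 1 : ℝ) *
                            ∑ i : Fin q, ∑ j : Fin (K i), L i j)) * t) ^ (y j0) /
                        (Nat.factorial (y j0)) * Real.exp (-(mu j0 * t))
                  else 0
        else 0 := by
  set Λ : ℝ := ∑ i : Fin q, ∑ j : Fin (K i), L i j with hΛdef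
  have hLnn : ∀ i j, 0 ≤ L i j := fun i j => (hL i j).le
  have hmunn : ∀ j, 0 ≤ mu j := fun j => (hmu j).le
  have core2 : ∀ m : ℕ, (∏ i : Fin q, gE (K i) (L i) (n i) (m : ℝ))
      = (∑' x : (i : Fin q) → Fin (K i) → ℕ,
          if (∀ i : Fin q, (∑ j : Fin (K i), ((j : ℕ) + 1) * x i j) = n i) then
            (∏ i : Fin q, ∏ j : Fin (K i),
              ENNReal.ofReal (L i j ^ (x i j) / (Nat.factorial (x i j)))) *
              (m : ℝ≥0∞) ^ (∑ i : Fin q, ∑ j : Fin (K i), x i j)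
          else 0) * ENNReal.ofReal (Real.exp (-((m : ℝ) * Λ))) := by
    intro m
    rw [Finset.prod_congr rfl (fun i _ => gE_eq (K i) (L i) (hLnn i) (n i) m),
      Finset.prod_mul_distrib,
      prod_tsum_pi q (fun i => Fin (K i) → ℕ) (fun i xi =>
        if (∑ j : Fin (K i), ((j : ℕ) + 1) * xi j) = n i then
          (∏ j : Fin (K i), ENNReal.ofReal (L i j ^ (xi j) / (Nat.factorial (xi j)))) *
            (m : ℝ≥0∞) ^ (∑ j, xi j)
        else 0)]
    congr 1
    · refine tsum_congr fun x => ?_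
      rw [prod_ite_zero]
      refine if_congr Iff.rfl ?_ rfl
      rw [Finset.prod_mul_distrib, Finset.prod_pow_eq_pow_sum]
    · rw [← ENNReal.ofReal_prod_of_nonneg (fun i _ => Real.exp_nonneg _), ← Real.exp_sum]
      congr 2
      rw [hΛdef, Finset.mul_sum, ← Finset.sum_neg_distrib]
  have key : (∑' m : ℕ, (∏ i : Fin q, gE (K i) (L i) (n i) (m : ℝ)) * gE k0 mu m t)
      = ∑' x : (i : Fin q) → Fin (K i) → ℕ,
          (if (∀ i : Fin q, (∑ j : Fin (K i), ((j : ℕ) + 1) * x i j) = n i) then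
            (∏ i : Fin q, ∏ j : Fin (K i),
              ENNReal.ofReal (L i j ^ (x i j) / (Nat.factorial (x i j)))) *
              ∑' m : ℕ, (m : ℝ≥0∞) ^ (∑ i : Fin q, ∑ j : Fin (K i), x i j) * tE k0 mu Λ t m
          else 0) := by
    calc (∑' m : ℕ, (∏ i : Fin q, gE (K i) (L i) (n i) (m : ℝ)) * gE k0 mu m t)
        = ∑' (m : ℕ) (x : (i : Fin q) → Fin (K i) → ℕ),
            (if (∀ i : Fin q, (∑ j : Fin (K i), ((j : ℕ) + 1) * x i j) = n i) then
              (∏ i : Fin q, ∏ j : Fin (K i),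
                ENNReal.ofReal (L i j ^ (x i j) / (Nat.factorial (x i j)))) *
                (m : ℝ≥0∞) ^ (∑ i : Fin q, ∑ j : Fin (K i), x i j)
            else 0) *
              (ENNReal.ofReal (Real.exp (-((m : ℝ) * Λ))) * gE k0 mu m t) := by
          refine tsum_congr fun m => ?_
          rw [core2 m, mul_assoc, ← ENNReal.tsum_mul_right]
      _ = ∑' (x : (i : Fin q) → Fin (K i) → ℕ) (m : ℕ),
            (if (∀ i : Fin q, (∑ j : Fin (K i), ((j : ℕ) + 1) * x i j) = n i) then
              (∏ i : Fin q, ∏ j : Fin (K i),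
                ENNReal.ofReal (L i j ^ (x i j) / (Nat.factorial (x i j)))) *
                (m : ℝ≥0∞) ^ (∑ i : Fin q, ∑ j : Fin (K i), x i j)
            else 0) *
              (ENNReal.ofReal (Real.exp (-((m : ℝ) * Λ))) * gE k0 mu m t) :=
          ENNReal.tsum_comm
      _ = ∑' x : (i : Fin q) → Fin (K i) → ℕ,
            (if (∀ i : Fin q, (∑ j : Fin (K i), ((j : ℕ) + 1) * x i j) = n i) then
              (∏ i : Fin q, ∏ j : Fin (K i),
                ENNReal.ofReal (L i j ^ (x i j) / (Nat.factorial (x i j)))) *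
                ∑' m : ℕ, (m : ℝ≥0∞) ^ (∑ i : Fin q, ∑ j : Fin (K i), x i j) *
                  tE k0 mu Λ t m
            else 0) := by
          refine tsum_congr fun x => ?_
          by_cases hc : (∀ i : Fin q, (∑ j : Fin (K i), ((j : ℕ) + 1) * x i j) = n i)
          · simp only [if_pos hc]
            rw [← ENNReal.tsum_mul_left]
            exact tsum_congr fun m => by rw [mul_assoc, tE_eq k0 mu hmunn Λ t ht m]
          · simp only [if_neg hc, zero_mul, tsum_zero]
  have hgE1 : ∀ m : ℕ, (∏ i : Fin q, gE (K i) (L i) (n i) (m : ℝ)) * gE k0 mu m t ≤ 1 :=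
    fun m => mul_le_one' (Finset.prod_le_one (fun i _ => zero_le)
      (fun i _ => gE_le_one _ _ (hLnn i) _ _ (Nat.cast_nonneg m)))
      (gE_le_one _ _ hmunn _ _ ht)
  have hsum_hE : (∑' m : ℕ, gE k0 mu m t) = 1 := by
    simp only [gE]
    rw [ENNReal.tsum_comm]
    have hpick : ∀ y : Fin k0 → ℕ,
        (∑' m : ℕ, if (∑ j0 : Fin k0, ((j0 : ℕ) + 1) * y j0) = m then
          ∏ j0 : Fin k0, ENNReal.ofReal
            ((mu j0 * t) ^ (y j0) / (Nat.factorial (y j0)) * Real.exp (-(mu j0 * t)))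
        else 0)
        = ∏ j0 : Fin k0, ENNReal.ofReal
            ((mu j0 * t) ^ (y j0) / (Nat.factorial (y j0)) * Real.exp (-(mu j0 * t))) := by
      intro y
      rw [tsum_eq_single (∑ j0 : Fin k0, ((j0 : ℕ) + 1) * y j0)
        (fun m hm => if_neg fun h => hm h.symm)]
      exact if_pos rfl
    rw [tsum_congr hpick,
      ← prod_tsum_pi k0 (fun _ => ℕ) (fun j0 r => ENNReal.ofReal
        ((mu j0 * t) ^ r / (Nat.factorial r) * Real.exp (-(mu j0 * t)))),
      Finset.prod_congr rfl fun j0 _ => tsum_poisson _ (mul_nonneg (hmunn j0) ht)]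
    simp
  have htotal_ne : (∑' m : ℕ, (∏ i : Fin q, gE (K i) (L i) (n i) (m : ℝ)) * gE k0 mu m t) ≠ ⊤ := by
    have hle : (∑' m : ℕ, (∏ i : Fin q, gE (K i) (L i) (n i) (m : ℝ)) * gE k0 mu m t)
        ≤ ∑' m : ℕ, gE k0 mu m t :=
      ENNReal.tsum_le_tsum fun m =>
        (mul_le_mul_left (Finset.prod_le_one (fun i _ => zero_le)
          (fun i _ => gE_le_one _ _ (hLnn i) _ _ (Nat.cast_nonneg m))) _).trans_eq (one_mul _)
    rw [hsum_hE] at hle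
    exact (lt_of_le_of_lt hle ENNReal.one_lt_top).ne
  have hterm_ne := fun x => ENNReal.ne_top_of_tsum_ne_top (key ▸ htotal_ne) x
  rw [mvIgcpPmf]
  have hL1 : ∀ m : ℕ, (∏ i : Fin q, gcpPmf (K i) (L i) (n i) m) * gcpPmf k0 mu m t
      = ((∏ i : Fin q, gE (K i) (L i) (n i) (m : ℝ)) * gE k0 mu m t).toReal := by
    intro m
    rw [ENNReal.toReal_mul, ENNReal.toReal_prod]
    exact congrArg₂ (· * ·)
      (Finset.prod_congr rfl fun i _ => gcpPmf_eq_toReal _ _ (hLnn i) _ _ (Nat.cast_nonneg m))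
      (gcpPmf_eq_toReal _ _ hmunn _ _ ht)
  rw [tsum_congr hL1,
    ← ENNReal.tsum_toReal_eq (fun m => (lt_of_le_of_lt (hgE1 m) ENNReal.one_lt_top).ne),
    key, ENNReal.tsum_toReal_eq hterm_ne]
  refine tsum_congr fun x => ?_
  by_cases hc : (∀ i : Fin q, (∑ j : Fin (K i), ((j : ℕ) + 1) * x i j) = n i)
  · rw [if_pos hc, if_pos hc, ENNReal.toReal_mul]
    congr 1
    · rw [ENNReal.toReal_prod]
      refine Finset.prod_congr rfl fun i _ => ?_
      rw [ENNReal.toReal_prod]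
      exact Finset.prod_congr rfl fun j _ => ENNReal.toReal_ofReal
        (div_nonneg (pow_nonneg (hLnn i j) _) (Nat.cast_nonneg _))
    · rw [ENNReal.tsum_toReal_eq (fun m => ENNReal.mul_ne_top
        (ENNReal.pow_ne_top (ENNReal.natCast_ne_top m)) (tE_ne_top k0 mu hmunn Λ t ht m))]
      refine tsum_congr fun m => ?_
      rw [ENNReal.toReal_mul, ENNReal.toReal_pow, ENNReal.toReal_natCast]
      congr 1
      rw [tE]
      exact (pi_ite_bridge (fun y : Fin k0 → ℕ => (∑ j0 : Fin k0, ((j0 : ℕ) + 1) * y j0) = m)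
        (fun j0 r => (mu j0 * Real.exp (-(((j0 : ℕ) + 1 : ℝ) * Λ)) * t) ^ r /
          (Nat.factorial r) * Real.exp (-(mu j0 * t)))
        (tE_nonneg_pt k0 mu hmunn Λ t ht)).symm
  · rw [if_neg hc, if_neg hc]
    simp
end

section
/- For all 1 ≤ i, l ≤ q and t ≥ 0, the covariance of the components M_i(M₀(t)) and M_l(M₀(t)) of the multivariate IGCP satisfies C_{il}(t) − e_i(t)·e_l(t) = 𝟙{i=l}·(Σ_{j₀=1}^{k₀} j₀ μ_{j₀} t)·(Σ_{j_i=1}^{k_i} j_i² λ_{ij_i}) + (Σ_{j_i=1}^{k_i} j_i λ_{ij_i})·(Σ_{j_l=1}^{k_l} j_l λ_{lj_l})·(Σ_{j₀=1}^{k₀} j₀² μ_{j₀} t). -/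
open scoped ENNReal

/-! ### Auxiliary Poisson series lemmas -/

lemma igcp_exp_series (c : ℝ) : ∑' n : ℕ, c ^ n / n.factorial = Real.exp c := by
  rw [Real.exp_eq_exp_ℝ, NormedSpace.exp_eq_tsum_div]

lemma igcp_pois_shift (c : ℝ) (n : ℕ) :
    ((n+1 : ℕ) : ℝ) * c ^ (n+1) / (n+1).factorial = c * (c ^ n / n.factorial) := by
  rw [Nat.factorial_succ, pow_succ]
  push_cast
  have h1 : (n.factorial : ℝ) ≠ 0 := by positivity
  field_simp

lemma igcp_summable_mean (c : ℝ) : Summable (fun n : ℕ => (n : ℝ) * c ^ n / n.factorial) := by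
  rw [← summable_nat_add_iff 1]
  simp_rw [igcp_pois_shift c]
  exact (Real.summable_pow_div_factorial c).mul_left c

lemma igcp_mean_series (c : ℝ) : ∑' n : ℕ, (n : ℝ) * c ^ n / n.factorial = c * Real.exp c := by
  rw [Summable.tsum_eq_zero_add (igcp_summable_mean c)]
  simp_rw [igcp_pois_shift c]
  rw [tsum_mul_left, igcp_exp_series]
  simp

lemma igcp_pois_shift2 (c : ℝ) (n : ℕ) :
    ((n+2 : ℕ) : ℝ) * ((n+2 : ℕ) - 1) * c ^ (n+2) / (n+2).factorial = c^2 * (c ^ n / n.factorial) := by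
  rw [Nat.factorial_succ, Nat.factorial_succ, pow_succ, pow_succ]
  push_cast
  have h1 : (n.factorial : ℝ) ≠ 0 := by positivity
  field_simp
  ring

lemma igcp_summable_fac2 (c : ℝ) :
    Summable (fun n : ℕ => (n : ℝ) * ((n:ℝ) - 1) * c ^ n / n.factorial) := by
  rw [← summable_nat_add_iff 2]
  have : ∀ n : ℕ, ((n+2 : ℕ) : ℝ) * (((n+2:ℕ):ℝ) - 1) * c ^ (n+2) / (n+2).factorial
      = c^2 * (c ^ n / n.factorial) := fun n => by
    have := igcp_pois_shift2 c n; push_cast at this ⊢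
    convert this using 2
  simp only [Nat.cast_add, Nat.cast_ofNat] at this ⊢
  simp_rw [this]
  exact (Real.summable_pow_div_factorial c).mul_left _

lemma igcp_fac2_series (c : ℝ) :
    ∑' n : ℕ, (n : ℝ) * ((n:ℝ)-1) * c ^ n / n.factorial = c^2 * Real.exp c := by
  rw [Summable.tsum_eq_zero_add (igcp_summable_fac2 c)]
  rw [Summable.tsum_eq_zero_add ((summable_nat_add_iff 1).mpr (igcp_summable_fac2 c))]
  have : ∀ n : ℕ, ((n:ℝ)+1+1) * ((n:ℝ)+1+1-1) * c ^ (n+1+1) / ((n+1+1).factorial : ℝ)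
      = c^2 * (c ^ n / n.factorial) := fun n => by
    have := igcp_pois_shift2 c n; push_cast at this ⊢
    convert this using 2 <;> ring
  push_cast
  simp_rw [this]
  rw [tsum_mul_left, igcp_exp_series]
  simp

lemma igcp_summable_sq (c : ℝ) : Summable (fun n : ℕ => (n : ℝ)^2 * c ^ n / n.factorial) := by
  have h : ∀ n : ℕ, (n : ℝ)^2 * c ^ n / n.factorial
      = (n : ℝ) * ((n:ℝ)-1) * c ^ n / n.factorial + (n : ℝ) * c ^ n / n.factorial := fun n => by
    ring
  simp_rw [h]
  exact (igcp_summable_fac2 c).add (igcp_summable_mean c)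

lemma igcp_sq_series (c : ℝ) :
    ∑' n : ℕ, (n : ℝ)^2 * c ^ n / n.factorial = (c + c^2) * Real.exp c := by
  have h : ∀ n : ℕ, (n : ℝ)^2 * c ^ n / n.factorial
      = (n : ℝ) * ((n:ℝ)-1) * c ^ n / n.factorial + (n : ℝ) * c ^ n / n.factorial := fun n => by
    ring
  simp_rw [h]
  rw [Summable.tsum_add (igcp_summable_fac2 c) (igcp_summable_mean c), igcp_fac2_series, igcp_mean_series]
  ring

/-! ### Poisson pmf in `ℝ≥0∞` -/

noncomputable def pE (c : ℝ) (n : ℕ) : ℝ≥0∞ :=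
  ENNReal.ofReal (c ^ n / n.factorial * Real.exp (-c))

lemma pE_sum (c : ℝ) (hc : 0 ≤ c) : ∑' n : ℕ, pE c n = 1 := by
  unfold pE
  rw [← ENNReal.ofReal_tsum_of_nonneg (fun n => by positivity)
    ((Real.summable_pow_div_factorial c).mul_right _)]
  rw [tsum_mul_right, igcp_exp_series, ← Real.exp_add]
  simp

lemma pE_mean (c : ℝ) (hc : 0 ≤ c) : ∑' n : ℕ, (n : ℝ≥0∞) * pE c n = ENNReal.ofReal c := by
  unfold pE
  have h : ∀ n : ℕ, (n : ℝ≥0∞) * ENNReal.ofReal (c ^ n / n.factorial * Real.exp (-c))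
      = ENNReal.ofReal ((n : ℝ) * c ^ n / n.factorial * Real.exp (-c)) := fun n => by
    rw [← ENNReal.ofReal_natCast n, ← ENNReal.ofReal_mul (by positivity)]
    ring_nf
  simp_rw [h]
  rw [← ENNReal.ofReal_tsum_of_nonneg (fun n => by positivity)
    ((igcp_summable_mean c).mul_right _)]
  rw [tsum_mul_right, igcp_mean_series]
  rw [mul_assoc, ← Real.exp_add]
  simp

lemma pE_sq (c : ℝ) (hc : 0 ≤ c) :
    ∑' n : ℕ, (n : ℝ≥0∞)^2 * pE c n = ENNReal.ofReal (c + c^2) := by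
  unfold pE
  have h : ∀ n : ℕ, (n : ℝ≥0∞)^2 * ENNReal.ofReal (c ^ n / n.factorial * Real.exp (-c))
      = ENNReal.ofReal ((n : ℝ)^2 * c ^ n / n.factorial * Real.exp (-c)) := fun n => by
    rw [← ENNReal.ofReal_natCast n, ← ENNReal.ofReal_pow (by positivity),
      ← ENNReal.ofReal_mul (by positivity)]
    ring_nf
  simp_rw [h]
  rw [← ENNReal.ofReal_tsum_of_nonneg (fun n => by positivity)
    ((igcp_summable_sq c).mul_right _)]
  rw [tsum_mul_right, igcp_sq_series]
  rw [mul_assoc, ← Real.exp_add]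
  simp

/-! ### Fubini-type lemmas for products over `Fin k → ℕ` -/

lemma tsum_pi_prod : ∀ (k : ℕ) (g : Fin k → ℕ → ℝ≥0∞),
    ∑' x : Fin k → ℕ, ∏ j, g j (x j) = ∏ j, ∑' n : ℕ, g j n := by
  intro k
  induction k with
  | zero =>
    intro g
    simp only [Finset.univ_eq_empty, Finset.prod_empty]
    exact tsum_eq_single (fun _ => 0) (fun x hx => (hx (Subsingleton.elim x _)).elim)
  | succ k ih =>
    intro g
    rw [← (Fin.consEquiv (fun _ : Fin (k+1) => ℕ)).tsum_eq]
    rw [ENNReal.tsum_prod']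
    simp only [Fin.consEquiv_apply]
    have h : ∀ (a : ℕ) (x : Fin k → ℕ),
        ∏ j : Fin (k+1), g j (Fin.cons (α := fun _ => ℕ) a x j)
          = g 0 a * ∏ j : Fin k, g j.succ (x j) := by
      intro a x
      rw [Fin.prod_univ_succ]
      simp
    simp_rw [h]
    simp_rw [ENNReal.tsum_mul_left]
    rw [ih (fun j n => g j.succ n)]
    rw [ENNReal.tsum_mul_right, Fin.prod_univ_succ]

lemma tsum_pi_coord (k : ℕ) (p : Fin k → ℕ → ℝ≥0∞) (hp : ∀ j, ∑' n : ℕ, p j n = 1)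
    (j0 : Fin k) (f : ℕ → ℝ≥0∞) :
    ∑' x : Fin k → ℕ, f (x j0) * ∏ j, p j (x j) = ∑' n : ℕ, f n * p j0 n := by
  have h : ∀ x : Fin k → ℕ,
      f (x j0) * ∏ j, p j (x j) = ∏ j, (if j = j0 then f (x j) else 1) * p j (x j) := by
    intro x
    rw [Finset.prod_mul_distrib, Finset.prod_ite_eq' Finset.univ j0 (fun j => f (x j))]
    simp
  simp_rw [h]
  rw [tsum_pi_prod k (fun j n => (if j = j0 then f n else 1) * p j n)]
  have h2 : ∀ j : Fin k, (∑' n : ℕ, (if j = j0 then f n else 1) * p j n)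
      = if j = j0 then ∑' n : ℕ, f n * p j0 n else 1 := by
    intro j
    by_cases hj : j = j0
    · subst hj; simp
    · simp [hj, hp j]
  simp_rw [h2]
  rw [Finset.prod_ite_eq' Finset.univ j0 (fun _ => ∑' n : ℕ, f n * p j0 n)]
  simp

lemma tsum_pi_coord2 (k : ℕ) (p : Fin k → ℕ → ℝ≥0∞) (hp : ∀ j, ∑' n : ℕ, p j n = 1)
    (j0 j1 : Fin k) (hne : j0 ≠ j1) (f f1 : ℕ → ℝ≥0∞) :
    ∑' x : Fin k → ℕ, f (x j0) * f1 (x j1) * ∏ j, p j (x j)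
      = (∑' n : ℕ, f n * p j0 n) * (∑' n : ℕ, f1 n * p j1 n) := by
  have h : ∀ x : Fin k → ℕ,
      f (x j0) * f1 (x j1) * ∏ j, p j (x j)
        = ∏ j, ((if j = j0 then f (x j) else 1) * (if j = j1 then f1 (x j) else 1)) * p j (x j) := by
    intro x
    rw [Finset.prod_mul_distrib, Finset.prod_mul_distrib,
      Finset.prod_ite_eq' Finset.univ j0 (fun j => f (x j)),
      Finset.prod_ite_eq' Finset.univ j1 (fun j => f1 (x j))]
    simp
  simp_rw [h]
  rw [tsum_pi_prod k (fun j n => ((if j = j0 then f n else 1) * (if j = j1 then f1 n else 1)) * p j n)]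
  have h2 : ∀ j : Fin k, (∑' n : ℕ, ((if j = j0 then f n else 1) * (if j = j1 then f1 n else 1)) * p j n)
      = (if j = j0 then ∑' n : ℕ, f n * p j0 n else 1)
        * (if j = j1 then ∑' n : ℕ, f1 n * p j1 n else 1) := by
    intro j
    by_cases hj : j = j0
    · subst hj
      simp [if_neg hne]
    · by_cases hj1 : j = j1
      · subst hj1; simp [hj]
      · simp [hj, hj1, hp j]
  simp_rw [h2]
  rw [Finset.prod_mul_distrib,
    Finset.prod_ite_eq' Finset.univ j0 (fun _ => ∑' n : ℕ, f n * p j0 n),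
    Finset.prod_ite_eq' Finset.univ j1 (fun _ => ∑' n : ℕ, f1 n * p j1 n)]
  simp

/-! ### GCP pmf in `ℝ≥0∞` and its moments -/

noncomputable def gcpE (k : ℕ) (lam : Fin k → ℝ) (n : ℕ) (t : ℝ) : ℝ≥0∞ :=
  ∑' x : Fin k → ℕ,
    if (∑ j : Fin k, ((j : ℕ) + 1) * x j) = n then ∏ j, pE (lam j * t) (x j) else 0

lemma gcp_weighted (k : ℕ) (lam : Fin k → ℝ) (t : ℝ) (g : ℕ → ℝ≥0∞) :
    ∑' n : ℕ, g n * gcpE k lam n t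
      = ∑' x : Fin k → ℕ, g (∑ j : Fin k, ((j : ℕ) + 1) * x j) * ∏ j, pE (lam j * t) (x j) := by
  unfold gcpE
  simp_rw [← ENNReal.tsum_mul_left]
  rw [ENNReal.tsum_comm]
  refine tsum_congr fun x => ?_
  rw [tsum_eq_single (∑ j : Fin k, ((j : ℕ) + 1) * x j)
    (fun n hn => by rw [if_neg (fun h => hn h.symm), mul_zero])]
  rw [if_pos rfl]

lemma gcpE_norm (k : ℕ) (lam : Fin k → ℝ) (t : ℝ) (hc : ∀ j, 0 ≤ lam j * t) :
    ∑' n : ℕ, gcpE k lam n t = 1 := by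
  have := gcp_weighted k lam t (fun _ => 1)
  simp only [one_mul] at this
  rw [this, tsum_pi_prod k (fun j n => pE (lam j * t) n)]
  simp [pE_sum _ (hc _)]

lemma gcpE_mean (k : ℕ) (lam : Fin k → ℝ) (t : ℝ) (hc : ∀ j, 0 ≤ lam j * t) :
    ∑' n : ℕ, (n : ℝ≥0∞) * gcpE k lam n t
      = ENNReal.ofReal ((∑ j : Fin k, ((j : ℕ) + 1 : ℝ) * lam j) * t) := by
  rw [gcp_weighted k lam t (fun n => (n : ℝ≥0∞))]
  have h1 : ∀ x : Fin k → ℕ,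
      ((∑ j : Fin k, ((j : ℕ) + 1) * x j : ℕ) : ℝ≥0∞) * ∏ j, pE (lam j * t) (x j)
        = ∑ j : Fin k, (((j : ℕ) + 1 : ℝ≥0∞)) * ((x j : ℝ≥0∞) * ∏ j', pE (lam j' * t) (x j')) := by
    intro x
    rw [Nat.cast_sum, Finset.sum_mul]
    refine Finset.sum_congr rfl fun j _ => ?_
    push_cast
    ring
  simp_rw [h1]
  rw [Summable.tsum_finsetSum (fun _ _ => ENNReal.summable)]
  have h2 : ∀ j : Fin k,
      ∑' x : Fin k → ℕ, (((j : ℕ) + 1 : ℝ≥0∞)) * ((x j : ℝ≥0∞) * ∏ j', pE (lam j' * t) (x j'))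
        = (((j : ℕ) + 1 : ℝ≥0∞)) * ENNReal.ofReal (lam j * t) := by
    intro j
    rw [ENNReal.tsum_mul_left,
      tsum_pi_coord k (fun j' n => pE (lam j' * t) n) (fun j' => pE_sum _ (hc j')) j
        (fun n => (n : ℝ≥0∞)),
      pE_mean _ (hc j)]
  simp_rw [h2]
  have h3 : ∀ j : Fin k, (((j : ℕ) + 1 : ℝ≥0∞)) * ENNReal.ofReal (lam j * t)
      = ENNReal.ofReal ((((j : ℕ) + 1 : ℝ)) * lam j * t) := by
    intro j
    rw [← ENNReal.ofReal_natCast (j : ℕ), ← ENNReal.ofReal_one,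
      ← ENNReal.ofReal_add (by positivity) (by norm_num),
      ← ENNReal.ofReal_mul (by positivity)]
    congr 1
    ring
  simp_rw [h3]
  rw [← ENNReal.ofReal_sum_of_nonneg (fun j _ => by
    have := hc j
    nlinarith [(j : ℕ).cast_nonneg (α := ℝ)])]
  congr 1
  rw [Finset.sum_mul]

lemma gcpE_sq (k : ℕ) (lam : Fin k → ℝ) (t : ℝ) (hc : ∀ j, 0 ≤ lam j * t) :
    ∑' n : ℕ, (n : ℝ≥0∞)^2 * gcpE k lam n t
      = ENNReal.ofReal ((∑ j : Fin k, ((j : ℕ) + 1 : ℝ)^2 * lam j) * t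
          + ((∑ j : Fin k, ((j : ℕ) + 1 : ℝ) * lam j) * t)^2) := by
  have hp : ∀ j, ∑' n : ℕ, pE (lam j * t) n = 1 := fun j => pE_sum _ (hc j)
  rw [gcp_weighted k lam t (fun n => (n : ℝ≥0∞)^2)]
  have h1 : ∀ x : Fin k → ℕ,
      ((∑ j : Fin k, ((j : ℕ) + 1) * x j : ℕ) : ℝ≥0∞)^2 * ∏ j, pE (lam j * t) (x j)
        = ∑ j : Fin k, ∑ j' : Fin k, ((((j : ℕ) + 1 : ℝ≥0∞)) * (((j' : ℕ) + 1 : ℝ≥0∞)))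
            * ((x j : ℝ≥0∞) * (x j' : ℝ≥0∞) * ∏ j'', pE (lam j'' * t) (x j'')) := by
    intro x
    push_cast
    rw [sq, Finset.sum_mul_sum, Finset.sum_mul]
    refine Finset.sum_congr rfl fun j _ => ?_
    rw [Finset.sum_mul]
    refine Finset.sum_congr rfl fun j' _ => ?_
    ring
  simp_rw [h1]
  rw [Summable.tsum_finsetSum (fun (_ : Fin k) _ => ENNReal.summable)]
  have h2 : ∀ j : Fin k,
      (∑' x : Fin k → ℕ, ∑ j' : Fin k, ((((j : ℕ) + 1 : ℝ≥0∞)) * (((j' : ℕ) + 1 : ℝ≥0∞)))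
          * ((x j : ℝ≥0∞) * (x j' : ℝ≥0∞) * ∏ j'', pE (lam j'' * t) (x j'')))
        = ∑ j' : Fin k, ∑' x : Fin k → ℕ, ((((j : ℕ) + 1 : ℝ≥0∞)) * (((j' : ℕ) + 1 : ℝ≥0∞)))
          * ((x j : ℝ≥0∞) * (x j' : ℝ≥0∞) * ∏ j'', pE (lam j'' * t) (x j'')) :=
    fun j => Summable.tsum_finsetSum (fun _ _ => ENNReal.summable)
  simp_rw [h2, ENNReal.tsum_mul_left]
  have h3 : ∀ j j' : Fin k,
      (∑' x : Fin k → ℕ, (x j : ℝ≥0∞) * (x j' : ℝ≥0∞) * ∏ j'', pE (lam j'' * t) (x j''))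
        = if j = j' then ENNReal.ofReal (lam j * t + (lam j * t)^2)
          else ENNReal.ofReal (lam j * t) * ENNReal.ofReal (lam j' * t) := by
    intro j j'
    by_cases hjj : j = j'
    · subst hjj
      rw [if_pos rfl]
      have hsq : ∀ x : Fin k → ℕ, (x j : ℝ≥0∞) * (x j : ℝ≥0∞) * ∏ j'', pE (lam j'' * t) (x j'')
          = ((x j : ℝ≥0∞))^2 * ∏ j'', pE (lam j'' * t) (x j'') := fun x => by rw [sq]
      simp_rw [hsq]
      rw [tsum_pi_coord k (fun j'' n => pE (lam j'' * t) n) hp j (fun n => (n : ℝ≥0∞)^2)]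
      exact pE_sq _ (hc j)
    · rw [if_neg hjj,
        tsum_pi_coord2 k (fun j'' n => pE (lam j'' * t) n) hp j j' hjj
          (fun n => (n : ℝ≥0∞)) (fun n => (n : ℝ≥0∞)),
        pE_mean _ (hc j), pE_mean _ (hc j')]
  simp_rw [h3]
  have h4 : ∀ j j' : Fin k,
      ((((j : ℕ) + 1 : ℝ≥0∞)) * (((j' : ℕ) + 1 : ℝ≥0∞)))
        * (if j = j' then ENNReal.ofReal (lam j * t + (lam j * t)^2)
            else ENNReal.ofReal (lam j * t) * ENNReal.ofReal (lam j' * t))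
        = ENNReal.ofReal ((((j : ℕ) + 1 : ℝ)) * (((j' : ℕ) + 1 : ℝ))
            * (if j = j' then lam j * t + (lam j * t)^2 else (lam j * t) * (lam j' * t))) := by
    intro j j'
    have e1 : (((j : ℕ) + 1 : ℝ≥0∞)) = ENNReal.ofReal (((j : ℕ) + 1 : ℝ)) := by
      rw [← ENNReal.ofReal_natCast (j : ℕ), ← ENNReal.ofReal_one,
        ← ENNReal.ofReal_add (by positivity) (by norm_num)]
    have e2 : (((j' : ℕ) + 1 : ℝ≥0∞)) = ENNReal.ofReal (((j' : ℕ) + 1 : ℝ)) := by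
      rw [← ENNReal.ofReal_natCast (j' : ℕ), ← ENNReal.ofReal_one,
        ← ENNReal.ofReal_add (by positivity) (by norm_num)]
    by_cases hjj : j = j'
    · subst hjj
      rw [if_pos rfl, if_pos rfl, e1, ← ENNReal.ofReal_mul (by positivity),
        ← ENNReal.ofReal_mul (by positivity)]
    · have hcj := hc j
      rw [if_neg hjj, if_neg hjj, e1, e2, ← ENNReal.ofReal_mul (by positivity),
        ← ENNReal.ofReal_mul (by positivity), ← ENNReal.ofReal_mul (by positivity)]
  simp_rw [h4]
  have hnonneg : ∀ j j' : Fin k, 0 ≤ (((j : ℕ) + 1 : ℝ)) * (((j' : ℕ) + 1 : ℝ))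
      * (if j = j' then lam j * t + (lam j * t)^2 else (lam j * t) * (lam j' * t)) := by
    intro j j'
    by_cases hjj : j = j'
    · subst hjj; rw [if_pos rfl]; have := hc j; positivity
    · rw [if_neg hjj]; have := hc j; have := hc j'; positivity
  have h5 : ∀ j : Fin k,
      (∑ j' : Fin k, ENNReal.ofReal ((((j : ℕ) + 1 : ℝ)) * (((j' : ℕ) + 1 : ℝ))
          * (if j = j' then lam j * t + (lam j * t)^2 else (lam j * t) * (lam j' * t))))
        = ENNReal.ofReal (∑ j' : Fin k, (((j : ℕ) + 1 : ℝ)) * (((j' : ℕ) + 1 : ℝ))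
          * (if j = j' then lam j * t + (lam j * t)^2 else (lam j * t) * (lam j' * t))) :=
    fun j => (ENNReal.ofReal_sum_of_nonneg (fun j' _ => hnonneg j j')).symm
  simp_rw [h5]
  rw [← ENNReal.ofReal_sum_of_nonneg (fun j _ => Finset.sum_nonneg (fun j' _ => hnonneg j j'))]
  congr 1
  have split : ∀ j j' : Fin k, (((j : ℕ) + 1 : ℝ)) * (((j' : ℕ) + 1 : ℝ))
      * (if j = j' then lam j * t + (lam j * t)^2 else (lam j * t) * (lam j' * t))
      = ((((j : ℕ) + 1 : ℝ)) * (lam j * t)) * ((((j' : ℕ) + 1 : ℝ)) * (lam j' * t))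
        + (if j = j' then (((j : ℕ) + 1 : ℝ))^2 * (lam j * t) else 0) := by
    intro j j'
    by_cases hjj : j = j'
    · subst hjj; rw [if_pos rfl, if_pos rfl]; ring
    · rw [if_neg hjj, if_neg hjj]; ring
  simp_rw [split, Finset.sum_add_distrib, Finset.sum_ite_eq]
  simp only [Finset.mem_univ, if_true]
  rw [← Finset.sum_mul_sum, add_comm]
  have e : (∑ j : Fin k, (((j:ℕ):ℝ) + 1) * (lam j * t))
      = (∑ j : Fin k, (((j:ℕ):ℝ) + 1) * lam j) * t := by
    rw [Finset.sum_mul]; exact Finset.sum_congr rfl fun j _ => by ring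
  congr 1
  · rw [Finset.sum_mul]
    exact Finset.sum_congr rfl fun j _ => by ring
  · rw [e, sq]

section
variable (k : ℕ) (lam : Fin k → ℝ) (t : ℝ)

lemma gcpE_ne_top (hc : ∀ j, 0 ≤ lam j * t) (n : ℕ) : gcpE k lam n t ≠ ∞ := by
  have h := ENNReal.le_tsum (f := fun n => gcpE k lam n t) n
  rw [gcpE_norm k lam t hc] at h
  exact ne_top_of_le_ne_top ENNReal.one_ne_top h

lemma gcpPmf_eq (hc : ∀ j, 0 ≤ lam j * t) (n : ℕ) :
    gcpPmf k lam n t = (gcpE k lam n t).toReal := by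
  unfold gcpPmf gcpE
  rw [ENNReal.tsum_toReal_eq (fun x => by
    split
    · exact (ENNReal.prod_lt_top (fun j _ => ENNReal.ofReal_lt_top)).ne
    · exact ENNReal.zero_ne_top)]
  refine tsum_congr fun x => ?_
  split
  · rw [ENNReal.toReal_prod]
    refine Finset.prod_congr rfl fun j _ => ?_
    unfold pE
    rw [ENNReal.toReal_ofReal (by have := hc j; positivity)]
  · simp

lemma gcp_mean_real (hc : ∀ j, 0 ≤ lam j * t)
    (hnn : 0 ≤ (∑ j : Fin k, ((j : ℕ) + 1 : ℝ) * lam j) * t) :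
    ∑' n : ℕ, (n : ℝ) * gcpPmf k lam n t = (∑ j : Fin k, ((j : ℕ) + 1 : ℝ) * lam j) * t := by
  have h : ∀ n : ℕ, (n : ℝ) * gcpPmf k lam n t = ((n : ℝ≥0∞) * gcpE k lam n t).toReal := by
    intro n
    rw [ENNReal.toReal_mul, ENNReal.toReal_natCast, gcpPmf_eq k lam t hc]
  simp_rw [h]
  rw [← ENNReal.tsum_toReal_eq (fun n => ENNReal.mul_ne_top (ENNReal.natCast_ne_top n)
    (gcpE_ne_top k lam t hc n)), gcpE_mean k lam t hc, ENNReal.toReal_ofReal hnn]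

lemma gcp_mean_summable (hc : ∀ j, 0 ≤ lam j * t) :
    Summable (fun n : ℕ => (n : ℝ) * gcpPmf k lam n t) := by
  have h : ∀ n : ℕ, (n : ℝ) * gcpPmf k lam n t = ((n : ℝ≥0∞) * gcpE k lam n t).toReal := by
    intro n
    rw [ENNReal.toReal_mul, ENNReal.toReal_natCast, gcpPmf_eq k lam t hc]
  simp_rw [h]
  refine ENNReal.summable_toReal ?_
  rw [gcpE_mean k lam t hc]
  exact ENNReal.ofReal_ne_top

lemma gcp_sq_real (hc : ∀ j, 0 ≤ lam j * t)
    (hnn : 0 ≤ (∑ j : Fin k, ((j : ℕ) + 1 : ℝ)^2 * lam j) * t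
          + ((∑ j : Fin k, ((j : ℕ) + 1 : ℝ) * lam j) * t)^2) :
    ∑' n : ℕ, (n : ℝ)^2 * gcpPmf k lam n t
      = (∑ j : Fin k, ((j : ℕ) + 1 : ℝ)^2 * lam j) * t
          + ((∑ j : Fin k, ((j : ℕ) + 1 : ℝ) * lam j) * t)^2 := by
  have h : ∀ n : ℕ, (n : ℝ)^2 * gcpPmf k lam n t = ((n : ℝ≥0∞)^2 * gcpE k lam n t).toReal := by
    intro n
    rw [ENNReal.toReal_mul, ENNReal.toReal_pow, ENNReal.toReal_natCast, gcpPmf_eq k lam t hc]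
  simp_rw [h]
  rw [← ENNReal.tsum_toReal_eq (fun n => ENNReal.mul_ne_top
    (by simpa using ENNReal.pow_ne_top (n := 2) (ENNReal.natCast_ne_top n))
    (gcpE_ne_top k lam t hc n)), gcpE_sq k lam t hc, ENNReal.toReal_ofReal hnn]

lemma gcp_sq_summable (hc : ∀ j, 0 ≤ lam j * t) :
    Summable (fun n : ℕ => (n : ℝ)^2 * gcpPmf k lam n t) := by
  have h : ∀ n : ℕ, (n : ℝ)^2 * gcpPmf k lam n t = ((n : ℝ≥0∞)^2 * gcpE k lam n t).toReal := by
    intro n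
    rw [ENNReal.toReal_mul, ENNReal.toReal_pow, ENNReal.toReal_natCast, gcpPmf_eq k lam t hc]
  simp_rw [h]
  refine ENNReal.summable_toReal ?_
  rw [gcpE_sq k lam t hc]
  exact ENNReal.ofReal_ne_top
end

/-- the covariance of two components `M_i(M₀(t))` and `M_l(M₀(t))` of the
multivariate IGCP.  `C_{il}(t)` is their mixed second moment and `e_i(t)` the mean of
the `i`-th component. -/
theorem mvIgcp_cov (q : ℕ) (hq : 0 < q) (K : Fin q → ℕ) (hK : ∀ i, 0 < K i)
    (L : (i : Fin q) → Fin (K i) → ℝ) (hL : ∀ i j, 0 < L i j)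
    (k0 : ℕ) (hk0 : 0 < k0) (mu : Fin k0 → ℝ) (hmu : ∀ j0, 0 < mu j0)
    (i l : Fin q) (t : ℝ) (ht : 0 ≤ t) :
    (if i = l then
        ∑' m : ℕ, gcpPmf k0 mu m t * ∑' a : ℕ, (a : ℝ) ^ 2 * gcpPmf (K i) (L i) a m
      else
        ∑' m : ℕ, gcpPmf k0 mu m t *
          ((∑' a : ℕ, (a : ℝ) * gcpPmf (K i) (L i) a m) *
            (∑' b : ℕ, (b : ℝ) * gcpPmf (K l) (L l) b m))) -
      (∑' m : ℕ, gcpPmf k0 mu m t * ∑' a : ℕ, (a : ℝ) * gcpPmf (K i) (L i) a m) *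
      (∑' m : ℕ, gcpPmf k0 mu m t * ∑' a : ℕ, (a : ℝ) * gcpPmf (K l) (L l) a m) =
    (if i = l then
        (∑ j0 : Fin k0, ((j0 : ℕ) + 1 : ℝ) * mu j0 * t) *
          (∑ j : Fin (K i), ((j : ℕ) + 1 : ℝ) ^ 2 * L i j)
      else 0) +
      (∑ j : Fin (K i), ((j : ℕ) + 1 : ℝ) * L i j) *
        (∑ j : Fin (K l), ((j : ℕ) + 1 : ℝ) * L l j) *
        (∑ j0 : Fin k0, ((j0 : ℕ) + 1 : ℝ) ^ 2 * mu j0 * t) := by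
  have hc0 : ∀ j0 : Fin k0, 0 ≤ mu j0 * t := fun j0 => mul_nonneg (hmu j0).le ht
  have hS0 : 0 ≤ ∑ j0 : Fin k0, ((j0 : ℕ) + 1 : ℝ) * mu j0 :=
    Finset.sum_nonneg fun j _ => by have := hmu j; positivity
  have hQ0 : 0 ≤ ∑ j0 : Fin k0, ((j0 : ℕ) + 1 : ℝ) ^ 2 * mu j0 :=
    Finset.sum_nonneg fun j _ => by have := hmu j; positivity
  have hnn0 : 0 ≤ (∑ j0 : Fin k0, ((j0 : ℕ) + 1 : ℝ) * mu j0) * t := mul_nonneg hS0 ht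
  have hnn0' : 0 ≤ (∑ j0 : Fin k0, ((j0 : ℕ) + 1 : ℝ) ^ 2 * mu j0) * t
      + ((∑ j0 : Fin k0, ((j0 : ℕ) + 1 : ℝ) * mu j0) * t) ^ 2 :=
    add_nonneg (mul_nonneg hQ0 ht) (sq_nonneg _)
  have hSi : ∀ i' : Fin q, 0 ≤ ∑ j : Fin (K i'), ((j : ℕ) + 1 : ℝ) * L i' j :=
    fun i' => Finset.sum_nonneg fun j _ => by have := hL i' j; positivity
  have hQi : ∀ i' : Fin q, 0 ≤ ∑ j : Fin (K i'), ((j : ℕ) + 1 : ℝ) ^ 2 * L i' j :=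
    fun i' => Finset.sum_nonneg fun j _ => by have := hL i' j; positivity
  have hci : ∀ (i' : Fin q) (m : ℕ) (j : Fin (K i')), 0 ≤ L i' j * (m : ℝ) :=
    fun i' m j => mul_nonneg (hL i' j).le (Nat.cast_nonneg m)
  have hmean : ∀ (i' : Fin q) (m : ℕ),
      ∑' a : ℕ, (a : ℝ) * gcpPmf (K i') (L i') a (m : ℝ)
        = (∑ j : Fin (K i'), ((j : ℕ) + 1 : ℝ) * L i' j) * (m : ℝ) :=
    fun i' m => gcp_mean_real _ _ _ (hci i' m) (mul_nonneg (hSi i') (Nat.cast_nonneg m))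
  have hsq : ∀ (i' : Fin q) (m : ℕ),
      ∑' a : ℕ, (a : ℝ) ^ 2 * gcpPmf (K i') (L i') a (m : ℝ)
        = (∑ j : Fin (K i'), ((j : ℕ) + 1 : ℝ) ^ 2 * L i' j) * (m : ℝ)
          + ((∑ j : Fin (K i'), ((j : ℕ) + 1 : ℝ) * L i' j) * (m : ℝ)) ^ 2 :=
    fun i' m => gcp_sq_real _ _ _ (hci i' m)
      (add_nonneg (mul_nonneg (hQi i') (Nat.cast_nonneg m)) (sq_nonneg _))
  have outer_mean := gcp_mean_real k0 mu t hc0 hnn0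
  have outer_sq := gcp_sq_real k0 mu t hc0 hnn0'
  have outer_mean_summable := gcp_mean_summable k0 mu t hc0
  have outer_sq_summable := gcp_sq_summable k0 mu t hc0
  have hA : (∑ j0 : Fin k0, ((j0 : ℕ) + 1 : ℝ) * mu j0 * t)
      = (∑ j0 : Fin k0, ((j0 : ℕ) + 1 : ℝ) * mu j0) * t := by rw [Finset.sum_mul]
  have hB : (∑ j0 : Fin k0, ((j0 : ℕ) + 1 : ℝ) ^ 2 * mu j0 * t)
      = (∑ j0 : Fin k0, ((j0 : ℕ) + 1 : ℝ) ^ 2 * mu j0) * t := by rw [Finset.sum_mul]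
  have h2 : ∀ (i' : Fin q) (m : ℕ),
      gcpPmf k0 mu m t * ((∑ j : Fin (K i'), ((j : ℕ) + 1 : ℝ) * L i' j) * (m : ℝ))
        = (∑ j : Fin (K i'), ((j : ℕ) + 1 : ℝ) * L i' j) * ((m : ℝ) * gcpPmf k0 mu m t) :=
    fun i' m => by ring
  by_cases hil : i = l
  · subst hil
    rw [if_pos rfl, if_pos rfl]
    simp_rw [hsq i, hmean i]
    have h1 : ∀ m : ℕ,
        gcpPmf k0 mu m t * ((∑ j : Fin (K i), ((j : ℕ) + 1 : ℝ) ^ 2 * L i j) * (m : ℝ)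
            + ((∑ j : Fin (K i), ((j : ℕ) + 1 : ℝ) * L i j) * (m : ℝ)) ^ 2)
          = (∑ j : Fin (K i), ((j : ℕ) + 1 : ℝ) ^ 2 * L i j) * ((m : ℝ) * gcpPmf k0 mu m t)
            + (∑ j : Fin (K i), ((j : ℕ) + 1 : ℝ) * L i j) ^ 2
              * ((m : ℝ) ^ 2 * gcpPmf k0 mu m t) := fun m => by ring
    simp_rw [h1, h2 i]
    rw [Summable.tsum_add (outer_mean_summable.mul_left _) (outer_sq_summable.mul_left _),
      tsum_mul_left, tsum_mul_left, tsum_mul_left, outer_mean, outer_sq, hA, hB]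
    ring
  · rw [if_neg hil, if_neg hil]
    simp_rw [hmean i, hmean l]
    have h3 : ∀ m : ℕ,
        gcpPmf k0 mu m t * ((∑ j : Fin (K i), ((j : ℕ) + 1 : ℝ) * L i j) * (m : ℝ)
            * ((∑ j : Fin (K l), ((j : ℕ) + 1 : ℝ) * L l j) * (m : ℝ)))
          = ((∑ j : Fin (K i), ((j : ℕ) + 1 : ℝ) * L i j)
              * (∑ j : Fin (K l), ((j : ℕ) + 1 : ℝ) * L l j))
            * ((m : ℝ) ^ 2 * gcpPmf k0 mu m t) := fun m => by ring
    simp_rw [h3, h2 i, h2 l]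
    rw [tsum_mul_left, tsum_mul_left, tsum_mul_left, outer_mean, outer_sq, hB]
    ring
end

section
/- For all ω ∈ ℝ, t ≥ 0 and 1 ≤ i, l ≤ q with i ≠ l, Σ_{m=0}^∞ p₀(m,t)·(Σ_{a=0}^∞ e^{ω a} p_i(a,m))·(Σ_{b=0}^∞ e^{−ω b} p_l(b,m)) = exp(−Σ_{j₀=1}^{k₀} μ_{j₀} t (1 − exp(Σ_{j_i=1}^{k_i} j₀ λ_{ij_i}(e^{ω j_i} − 1) + Σ_{j_l=1}^{k_l} j₀ λ_{lj_l}(e^{−ω j_l} − 1)))); this is the joint exponential moment E[exp(ω(M_i(M₀(t)) − M_l(M₀(t))))] of two distinct components of the multivariate IGCP. -/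
lemma exp_tsum (x : ℝ) : ∑' n : ℕ, x ^ n / (Nat.factorial n) = Real.exp x := by
  rw [Real.exp_eq_exp_ℝ, NormedSpace.exp_eq_tsum_div]

lemma poisson_aux (a c' : ℝ) :
    (fun m : ℕ => Real.exp (c' * m) * (a ^ m / (Nat.factorial m) * Real.exp (-a))) =
    (fun m : ℕ => Real.exp (-a) * ((a * Real.exp c') ^ m / (Nat.factorial m))) := by
  funext m
  rw [mul_pow, mul_comm c' (m : ℝ), Real.exp_nat_mul]
  ring

lemma poisson_summable (a c' : ℝ) :
    Summable (fun m : ℕ => Real.exp (c' * m) * (a ^ m / (Nat.factorial m) * Real.exp (-a))) := by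
  rw [poisson_aux]
  exact (Real.summable_pow_div_factorial _).mul_left _

lemma poisson_tsum (a c' : ℝ) :
    ∑' m : ℕ, Real.exp (c' * m) * (a ^ m / (Nat.factorial m) * Real.exp (-a)) =
      Real.exp (a * (Real.exp c' - 1)) := by
  rw [poisson_aux, tsum_mul_left, exp_tsum, ← Real.exp_add]
  ring_nf

lemma pi_prod_tsum : ∀ (k : ℕ) (f : Fin k → ℕ → ℝ), (∀ j n, 0 ≤ f j n) → (∀ j, Summable (f j)) →
    Summable (fun x : Fin k → ℕ => ∏ j, f j (x j)) ∧
      (∑' x : Fin k → ℕ, ∏ j, f j (x j)) = ∏ j, ∑' n, f j n := by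
  intro k
  induction k with
  | zero =>
    intro f _ _
    haveI : Unique (Fin 0 → ℕ) := ⟨⟨fun j => j.elim0⟩, fun x => funext fun j => j.elim0⟩
    refine ⟨Summable.of_finite, ?_⟩
    simp [tsum_eq_single (default : Fin 0 → ℕ) (fun b hb => absurd (Subsingleton.elim b default) hb)]
  | succ k ih =>
    intro f hpos hsum
    set g : (Fin k → ℕ) → ℝ := fun x => ∏ j, f j.succ (x j) with hg
    obtain ⟨hgs, hgt⟩ := ih (fun j => f j.succ) (fun j n => hpos _ _) (fun j => hsum _)
    have hnorm0 : Summable (fun n => ‖f 0 n‖) := by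
      have : (fun n => ‖f 0 n‖) = f 0 := funext fun n => Real.norm_of_nonneg (hpos 0 n)
      rw [this]; exact hsum 0
    have hnormg : Summable (fun x => ‖g x‖) := by
      have : (fun x => ‖g x‖) = g := funext fun x =>
        Real.norm_of_nonneg (Finset.prod_nonneg fun j _ => hpos _ _)
      rw [this]; exact hgs
    have hprod : Summable (fun p : ℕ × (Fin k → ℕ) => f 0 p.1 * g p.2) :=
      summable_mul_of_summable_norm hnorm0 hnormg
    have htsum : ((∑' n, f 0 n) * ∑' x, g x) = ∑' p : ℕ × (Fin k → ℕ), f 0 p.1 * g p.2 :=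
      tsum_mul_tsum_of_summable_norm hnorm0 hnormg
    set e := (Fin.consEquiv fun _ : Fin (k + 1) => ℕ).symm with he
    have hcomp : (fun p : ℕ × (Fin k → ℕ) => f 0 p.1 * g p.2) ∘ e
        = fun x : Fin (k + 1) → ℕ => ∏ j, f j (x j) := by
      funext x
      simp [he, hg, Fin.prod_univ_succ, Fin.tail]
    constructor
    · rw [← hcomp]
      exact (Equiv.summable_iff e).2 hprod
    · calc (∑' x : Fin (k + 1) → ℕ, ∏ j, f j (x j))
          = ∑' x : Fin (k + 1) → ℕ,
              ((fun p : ℕ × (Fin k → ℕ) => f 0 p.1 * g p.2) ∘ e) x := by rw [hcomp]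
        _ = ∑' p : ℕ × (Fin k → ℕ), f 0 p.1 * g p.2 := by
              exact e.tsum_eq (fun p : ℕ × (Fin k → ℕ) => f 0 p.1 * g p.2)
        _ = (∑' n, f 0 n) * ∑' x, g x := htsum.symm
        _ = ∏ j : Fin (k + 1), ∑' n, f j n := by rw [hgt, Fin.prod_univ_succ]

lemma gcp_pgf (k : ℕ) (lam : Fin k → ℝ) (t : ℝ) (ht : ∀ j, 0 ≤ lam j * t) (c : ℝ) :
    ∑' n : ℕ, Real.exp (c * n) * gcpPmf k lam n t =
      Real.exp (∑ j : Fin k, lam j * t * (Real.exp (c * ((j : ℕ) + 1)) - 1)) := by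
  classical
  set S : (Fin k → ℕ) → ℕ := fun x => ∑ j : Fin k, ((j : ℕ) + 1) * x j with hS
  set g0 : (Fin k → ℕ) → ℝ := fun x =>
    ∏ j, (lam j * t) ^ (x j) / (Nat.factorial (x j)) * Real.exp (-(lam j * t)) with hg0
  set h : Fin k → ℕ → ℝ := fun j m =>
    Real.exp (c * ((j : ℕ) + 1) * m) *
      ((lam j * t) ^ m / (Nat.factorial m) * Real.exp (-(lam j * t))) with hh
  set F : ℕ × (Fin k → ℕ) → ℝ :=
    fun p => if S p.2 = p.1 then Real.exp (c * p.1) * g0 p.2 else 0 with hF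
  set G : (Fin k → ℕ) → ℝ := fun x => ∏ j, h j (x j) with hG
  have hpos : ∀ j m, 0 ≤ h j m := fun j m => mul_nonneg (Real.exp_pos _).le
    (mul_nonneg (div_nonneg (pow_nonneg (ht j) _) (Nat.cast_nonneg _)) (Real.exp_pos _).le)
  have hhsum : ∀ j, Summable (h j) := fun j => poisson_summable _ _
  obtain ⟨hGs, hGt⟩ := pi_prod_tsum k h hpos hhsum
  have hGG : ∀ x, G x = Real.exp (c * (S x : ℝ)) * g0 x := by
    intro x
    simp only [hG, hh, hg0]
    rw [Finset.prod_mul_distrib, ← Real.exp_sum]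
    congr 1
    simp only [hS]
    push_cast
    rw [Finset.mul_sum]
    congr 1
    exact Finset.sum_congr rfl fun j _ => by ring
  have hinj : Function.Injective (fun x : Fin k → ℕ => (S x, x)) :=
    fun a b hab => congrArg Prod.snd hab
  have hsupp : ∀ p ∉ Set.range (fun x : Fin k → ℕ => (S x, x)), F p = 0 := by
    intro p hp
    by_cases hc : S p.2 = p.1
    · exact absurd ⟨p.2, Prod.ext hc rfl⟩ hp
    · simp [hF, hc]
  have hsupp' : Function.support F ⊆ Set.range (fun x : Fin k → ℕ => (S x, x)) := by
    intro p hp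
    by_contra hr
    exact hp (hsupp p hr)
  have hFe : ∀ x, F (S x, x) = G x := by
    intro x
    rw [hGG x]
    simp [hF]
  have hFsum : Summable F := by
    refine (hinj.summable_iff hsupp).1 ?_
    have : F ∘ (fun x : Fin k → ℕ => (S x, x)) = G := funext hFe
    rw [this]; exact hGs
  have htsumF : ∑' p : ℕ × (Fin k → ℕ), F p = ∑' x, G x := by
    rw [← hinj.tsum_eq hsupp']
    exact tsum_congr hFe
  calc ∑' n : ℕ, Real.exp (c * n) * gcpPmf k lam n t
      = ∑' n : ℕ, ∑' x : Fin k → ℕ, F (n, x) := by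
        refine tsum_congr fun n => ?_
        have hgcp : gcpPmf k lam n t = ∑' x : Fin k → ℕ, if S x = n then g0 x else 0 := by
          simp only [hS, hg0, gcpPmf]
        rw [hgcp, ← tsum_mul_left]
        exact tsum_congr fun x => by rw [mul_ite, mul_zero]
    _ = ∑' p : ℕ × (Fin k → ℕ), F p := (Summable.tsum_prod hFsum).symm
    _ = ∑' x, G x := htsumF
    _ = ∏ j, ∑' m, h j m := hGt
    _ = ∏ j : Fin k, Real.exp (lam j * t * (Real.exp (c * ((j : ℕ) + 1)) - 1)) :=
        Finset.prod_congr rfl fun j _ => poisson_tsum _ _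
    _ = Real.exp (∑ j : Fin k, lam j * t * (Real.exp (c * ((j : ℕ) + 1)) - 1)) := by
        rw [Real.exp_sum]

/-- the joint exponential moment
`E[exp(ω(M_i(M₀(t)) − M_l(M₀(t))))]` of two distinct components of the multivariate
IGCP. -/
theorem mvIgcp_exp_moment (q : ℕ) (hq : 0 < q) (K : Fin q → ℕ) (hK : ∀ i, 0 < K i)
    (L : (i : Fin q) → Fin (K i) → ℝ) (hL : ∀ i j, 0 < L i j)
    (k0 : ℕ) (hk0 : 0 < k0) (mu : Fin k0 → ℝ) (hmu : ∀ j0, 0 < mu j0)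
    (ω : ℝ) (t : ℝ) (ht : 0 ≤ t) (i l : Fin q) (hil : i ≠ l) :
    ∑' m : ℕ, gcpPmf k0 mu m t *
        ((∑' a : ℕ, Real.exp (ω * a) * gcpPmf (K i) (L i) a m) *
          (∑' b : ℕ, Real.exp (-(ω * b)) * gcpPmf (K l) (L l) b m)) =
      Real.exp (-(∑ j0 : Fin k0, mu j0 * t *
        (1 - Real.exp
          ((∑ ji : Fin (K i), ((j0 : ℕ) + 1 : ℝ) * L i ji *
              (Real.exp (ω * ((ji : ℕ) + 1)) - 1)) +
            ∑ jl : Fin (K l), ((j0 : ℕ) + 1 : ℝ) * L l jl *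
              (Real.exp (-(ω * ((jl : ℕ) + 1))) - 1))))) := by
  set ci : ℝ := ∑ ji : Fin (K i), L i ji * (Real.exp (ω * ((ji : ℕ) + 1)) - 1) with hci
  set cl : ℝ := ∑ jl : Fin (K l), L l jl * (Real.exp ((-ω) * ((jl : ℕ) + 1)) - 1) with hcl
  have hstep : ∀ m : ℕ,
      gcpPmf k0 mu m t * ((∑' a : ℕ, Real.exp (ω * a) * gcpPmf (K i) (L i) a m) *
        (∑' b : ℕ, Real.exp (-(ω * b)) * gcpPmf (K l) (L l) b m))
      = Real.exp ((ci + cl) * m) * gcpPmf k0 mu m t := by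
    intro m
    have h1 : (∑' a : ℕ, Real.exp (ω * a) * gcpPmf (K i) (L i) a (m : ℝ))
        = Real.exp (ci * m) := by
      rw [gcp_pgf (K i) (L i) (m : ℝ) (fun j => mul_nonneg (hL i j).le (Nat.cast_nonneg m)) ω]
      congr 1
      rw [hci, Finset.sum_mul]
      exact Finset.sum_congr rfl fun j _ => by ring
    have h2 : (∑' b : ℕ, Real.exp (-(ω * b)) * gcpPmf (K l) (L l) b (m : ℝ))
        = Real.exp (cl * m) := by
      have hneg : ∀ b : ℕ, Real.exp (-(ω * b)) = Real.exp ((-ω) * b) := fun b => by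
        rw [neg_mul]
      rw [tsum_congr (fun b => by rw [hneg b] :
        ∀ b : ℕ, Real.exp (-(ω * b)) * gcpPmf (K l) (L l) b (m : ℝ)
          = Real.exp ((-ω) * b) * gcpPmf (K l) (L l) b (m : ℝ)),
        gcp_pgf (K l) (L l) (m : ℝ) (fun j => mul_nonneg (hL l j).le (Nat.cast_nonneg m)) (-ω)]
      congr 1
      rw [hcl, Finset.sum_mul]
      exact Finset.sum_congr rfl fun j _ => by ring
    rw [h1, h2, ← Real.exp_add]
    ring_nf
  rw [tsum_congr hstep, gcp_pgf k0 mu t (fun j => mul_nonneg (hmu j).le ht) (ci + cl)]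
  congr 1
  rw [← Finset.sum_neg_distrib]
  refine Finset.sum_congr rfl fun j0 _ => ?_
  have harg : (ci + cl) * ((j0 : ℕ) + 1 : ℝ)
      = (∑ ji : Fin (K i), ((j0 : ℕ) + 1 : ℝ) * L i ji *
          (Real.exp (ω * ((ji : ℕ) + 1)) - 1)) +
        ∑ jl : Fin (K l), ((j0 : ℕ) + 1 : ℝ) * L l jl *
          (Real.exp (-(ω * ((jl : ℕ) + 1))) - 1) := by
    rw [hci, hcl, add_mul, Finset.sum_mul, Finset.sum_mul]
    congr 1
    · exact Finset.sum_congr rfl fun ji _ => by ring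
    · refine Finset.sum_congr rfl fun jl _ => ?_
      rw [neg_mul]
      ring
  rw [harg]
  ring
end
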